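/- arXiv:math/0112305 — 7 statements merged into one kernel-verified Lean document; each statement's English description precedes it below -/
import Mathlib

section
/- Let A be a discrete valuation ring with maximal ideal p_A, and let B be a flat A-algebra that is complete with respect to the ideal p_A·B and such that B/p_A·B is a perfect ring of characteristic p. Then for every element x of B/p_A·B there is a unique lift s(x) ∈ B of x such that s(x) admits a p^m-th root in B for every m ≥ 0, and the resulting map s: B/p_A·B → B is multiplicative. -/
open IsLocalRing

/-- Key auxiliary statement: the Teichmüller-style multiplicative section exists for any
ideal `I` containing `p` with `B` `I`-adically complete and `B ⧸ I` perfect. -/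
theorem teich_aux (p : ℕ) [Fact p.Prime]
    (B : Type) [CommRing B] (I : Ideal B) [IsAdicComplete I B] (hpI : (p : B) ∈ I)
    (hperf : Function.Bijective (fun x : B ⧸ I => x ^ p)) :
    ∃ s : B ⧸ I → B,
      (∀ x : B ⧸ I, Ideal.Quotient.mk I (s x) = x) ∧
      (∀ (x : B ⧸ I) (m : ℕ), ∃ y : B, y ^ p ^ m = s x) ∧
      (∀ x y : B ⧸ I, s (x * y) = s x * s y) ∧
      (∀ (x : B ⧸ I) (b : B),
        Ideal.Quotient.mk I b = x → (∀ m : ℕ, ∃ y : B, y ^ p ^ m = b) → b = s x) := by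
  have hp : p.Prime := Fact.out
  -- membership in `I ^ n • ⊤`
  have hST : ∀ (n : ℕ) (c : B), c ∈ (I ^ n • ⊤ : Submodule B B) ↔ c ∈ I ^ n := by
    intro n c
    rw [show (I ^ n • ⊤ : Submodule B B) = I ^ n by rw [Ideal.smul_eq_mul, Ideal.mul_top]]
  -- Hausdorff property
  have hzero : ∀ c : B, (∀ n : ℕ, c ∈ I ^ n) → c = 0 := by
    intro c hc
    refine IsHausdorff.haus (IsAdicComplete.toIsHausdorff (I := I) (M := B)) c fun n => ?_
    rw [SModEq.sub_mem, sub_zero, hST]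
    exact hc n
  -- the inverse of Frobenius on the quotient
  set f : B ⧸ I → B ⧸ I := fun x => x ^ p with hf
  let e : (B ⧸ I) ≃ (B ⧸ I) := Equiv.ofBijective f hperf
  set g : B ⧸ I → B ⧸ I := fun x => e.symm x with hg
  have hgf : ∀ x, (g x) ^ p = x := fun x => e.apply_symm_apply x
  have hgmul : ∀ x y, g (x * y) = g x * g y := by
    intro x y
    apply hperf.1
    show f _ = f _
    simp only [hf, mul_pow, hgf]
  have hgitmul : ∀ (m : ℕ) (x y : B ⧸ I), g^[m] (x * y) = g^[m] x * g^[m] y := by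
    intro m
    induction m with
    | zero => simp
    | succ m ih =>
      intro x y
      simp [Function.iterate_succ_apply', ih, hgmul]
  have hgit : ∀ (m : ℕ) (x : B ⧸ I), (g^[m] x) ^ p ^ m = x := by
    intro m
    induction m with
    | zero => simp
    | succ m ih =>
      intro x
      rw [Function.iterate_succ_apply', pow_succ', pow_mul, hgf, ih]
  -- a set-theoretic lift
  obtain ⟨l, hl⟩ := (Ideal.Quotient.mk_surjective (I := I)).hasRightInverse
  -- the approximating sequence
  set u : B ⧸ I → ℕ → B := fun x m => l (g^[m] x) ^ p ^ m with hu
  -- key congruence lemma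
  have key : ∀ (a b : B) (k : ℕ), a - b ∈ I ^ (k + 1) → a ^ p - b ^ p ∈ I ^ (k + 2) := by
    intro a b k h
    have hab : a = b + (a - b) := by ring
    have hexp := add_pow_prime_eq hp b (a - b)
    rw [← hab] at hexp
    have h1 : (a - b) ^ p ∈ I ^ (k + 2) := by
      have : (a - b) ^ p ∈ (I ^ (k + 1)) ^ p := Ideal.pow_mem_pow h p
      rw [← pow_mul] at this
      exact Ideal.pow_le_pow_right (by nlinarith [hp.two_le]) this
    have h2 : (p : B) * ∑ j ∈ Finset.Ioo 0 p, b ^ j * (a - b) ^ (p - j) * ↑(p.choose j / p) ∈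
        I ^ (k + 2) := by
      have hsum : (∑ j ∈ Finset.Ioo 0 p, b ^ j * (a - b) ^ (p - j) * ↑(p.choose j / p)) ∈
          I ^ (k + 1) := by
        refine Ideal.sum_mem _ fun j hj => ?_
        rw [Finset.mem_Ioo] at hj
        refine Ideal.mul_mem_right _ _ (Ideal.mul_mem_left _ _ ?_)
        exact Ideal.pow_mem_of_mem _ h _ (by omega)
      have := Ideal.mul_mem_mul hpI hsum
      rwa [← pow_succ'] at this
    have : a ^ p - b ^ p = (a - b) ^ p +
        (p : B) * ∑ j ∈ Finset.Ioo 0 p, b ^ j * (a - b) ^ (p - j) * ↑(p.choose j / p) := by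
      have hS : (p : B) * b * (a - b) * ∑ j ∈ Finset.Ioo 0 p,
          b ^ (j - 1) * (a - b) ^ (p - j - 1) * ↑(p.choose j / p) =
          (p : B) * ∑ j ∈ Finset.Ioo 0 p, b ^ j * (a - b) ^ (p - j) * ↑(p.choose j / p) := by
        rw [Finset.mul_sum, Finset.mul_sum]
        refine Finset.sum_congr rfl fun j hj => ?_
        rw [Finset.mem_Ioo] at hj
        obtain ⟨i, rfl⟩ : ∃ i, j = i + 1 := ⟨j - 1, by omega⟩
        obtain ⟨r, hr⟩ : ∃ r, p - (i + 1) = r + 1 := ⟨p - (i + 1) - 1, by omega⟩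
        rw [hr, Nat.add_sub_cancel, Nat.add_sub_cancel]
        ring
      linear_combination hexp + hS
    rw [this]
    exact Ideal.add_mem _ h1 h2
  have keypow : ∀ (a b : B) (k m : ℕ), a - b ∈ I ^ (k + 1) →
      a ^ p ^ m - b ^ p ^ m ∈ I ^ (k + 1 + m) := by
    intro a b k m
    induction m generalizing a b k with
    | zero => intro h; simpa using h
    | succ m ih =>
      intro h
      have h1 : a ^ p - b ^ p ∈ I ^ (k + 1 + 1) := key a b k h
      have h2 := ih (a ^ p) (b ^ p) (k + 1) h1
      rw [← pow_mul, ← pow_mul, ← pow_succ'] at h2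
      have h3 : k + 1 + 1 + m = k + 1 + (m + 1) := by omega
      rwa [h3] at h2
  -- congruence between lifts
  have hlift : ∀ (a b : B), Ideal.Quotient.mk I a = Ideal.Quotient.mk I b → a - b ∈ I ^ 1 := by
    intro a b h
    rw [pow_one]
    exact (Ideal.Quotient.eq (I := I)).1 h
  -- Cauchy property of the sequence
  have hcauchy : ∀ (x : B ⧸ I) (m : ℕ), u x (m + 1) - u x m ∈ I ^ (m + 1) := by
    intro x m
    have h1 : Ideal.Quotient.mk I (l (g^[m + 1] x) ^ p) = Ideal.Quotient.mk I (l (g^[m] x)) := by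
      rw [map_pow, hl, hl, Function.iterate_succ_apply', hgf]
    have h2 := keypow _ _ 0 m (hlift _ _ h1)
    rw [← pow_mul, ← pow_succ'] at h2
    have h3 : (0 : ℕ) + 1 + m = m + 1 := by omega
    rw [h3] at h2
    simpa [hu] using h2
  have hchain : ∀ (x : B ⧸ I) (m n : ℕ), m ≤ n → u x n - u x m ∈ I ^ m := by
    intro x m n h
    induction n, h using Nat.le_induction with
    | base => simpa using (I ^ m).zero_mem
    | succ n hmn ih =>
      have h1 : u x (n + 1) - u x n ∈ I ^ m :=
        Ideal.pow_le_pow_right (by omega) (hcauchy x n)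
      have := Ideal.add_mem _ h1 ih
      simpa using this
  -- limits exist
  have hlim : ∀ x : B ⧸ I, ∃ L : B, ∀ n, u x n - L ∈ I ^ n := by
    intro x
    obtain ⟨L, hL⟩ := IsPrecomplete.prec (IsAdicComplete.toIsPrecomplete (I := I) (M := B))
      (f := u x) (fun {m n} h => by
        rw [SModEq.sub_mem, hST]
        simpa using (I ^ m).neg_mem (hchain x m n h))
    exact ⟨L, fun n => by have := hL n; rwa [SModEq.sub_mem, hST] at this⟩
  choose s hs using hlim
  -- first property: section of the projection
  have hsec : ∀ x : B ⧸ I, Ideal.Quotient.mk I (s x) = x := by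
    intro x
    have h1 := hs x 1
    rw [pow_one] at h1
    have h2 : Ideal.Quotient.mk I (u x 1) = Ideal.Quotient.mk I (s x) := by
      rw [Ideal.Quotient.eq]; exact h1
    rw [← h2]
    show Ideal.Quotient.mk I (l (g^[1] x) ^ p ^ 1) = x
    rw [map_pow, hl]
    exact hgit 1 x
  -- the limit of powers: `s (g^[m] x) ^ p ^ m = s x`
  have hroot : ∀ (x : B ⧸ I) (m : ℕ), s (g^[m] x) ^ p ^ m = s x := by
    intro x m
    have hdiff : ∀ n : ℕ, s (g^[m] x) ^ p ^ m - s x ∈ I ^ (n + 1) := by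
      intro n
      have h1 : s (g^[m] x) - u (g^[m] x) (n + 1) ∈ I ^ (n + 1) := by
        simpa using (I ^ (n + 1)).neg_mem (hs (g^[m] x) (n + 1))
      have h2 : s (g^[m] x) ^ p ^ m - u (g^[m] x) (n + 1) ^ p ^ m ∈ I ^ (n + 1 + m) :=
        keypow _ _ n m h1
      have h3 : u (g^[m] x) (n + 1) ^ p ^ m = u x (n + 1 + m) := by
        simp only [hu, ← pow_mul, ← pow_add, ← Function.iterate_add_apply]
      have h4 : u x (n + 1 + m) - s x ∈ I ^ (n + 1 + m) := hs x (n + 1 + m)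
      rw [h3] at h2
      have := Ideal.add_mem _ h2 h4
      rw [sub_add_sub_cancel] at this
      exact Ideal.pow_le_pow_right (by omega) this
    have : s (g^[m] x) ^ p ^ m - s x = 0 := hzero _ fun n => by
      cases n with
      | zero => simp
      | succ n => exact hdiff n
    exact sub_eq_zero.1 this
  -- multiplicativity
  have hsmul : ∀ x y : B ⧸ I, s (x * y) = s x * s y := by
    intro x y
    have hdiff : ∀ n : ℕ, s (x * y) - s x * s y ∈ I ^ (n + 1) := by
      intro n
      set J := I ^ (n + 1) with hJ
      have h1 : s (x * y) - u (x * y) (n + 1) ∈ J := by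
        simpa using J.neg_mem (hs (x * y) (n + 1))
      have h2 : Ideal.Quotient.mk I (l (g^[n + 1] (x * y))) =
          Ideal.Quotient.mk I (l (g^[n + 1] x) * l (g^[n + 1] y)) := by
        rw [map_mul, hl, hl, hl, hgitmul]
      have h3 : u (x * y) (n + 1) - u x (n + 1) * u y (n + 1) ∈ J := by
        have h5 := keypow _ _ 0 (n + 1) (hlift _ _ h2)
        rw [mul_pow] at h5
        have h6 := Ideal.pow_le_pow_right (show n + 1 ≤ 0 + 1 + (n + 1) by omega) h5
        simpa [hu, hJ] using h6
      have h4 : u x (n + 1) * u y (n + 1) - s x * s y ∈ J := by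
        have hx := hs x (n + 1)
        have hy := hs y (n + 1)
        have : u x (n + 1) * u y (n + 1) - s x * s y =
            u x (n + 1) * (u y (n + 1) - s y) + (u x (n + 1) - s x) * s y := by ring
        rw [this]
        exact J.add_mem (J.mul_mem_left _ hy) (J.mul_mem_right _ hx)
      have := Ideal.add_mem _ (Ideal.add_mem _ h1 h3) h4
      rw [sub_add_sub_cancel, sub_add_sub_cancel] at this
      exact this
    have : s (x * y) - s x * s y = 0 := hzero _ fun n => by
      cases n with
      | zero => simp
      | succ n => exact hdiff n
    exact sub_eq_zero.1 this
  -- uniqueness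
  have huniq : ∀ (x : B ⧸ I) (b : B), Ideal.Quotient.mk I b = x →
      (∀ m : ℕ, ∃ y : B, y ^ p ^ m = b) → b = s x := by
    intro x b hb hy
    have hfinj : ∀ m : ℕ, Function.Injective (fun z : B ⧸ I => z ^ p ^ m) := by
      intro m
      have : (fun z : B ⧸ I => z ^ p ^ m) = f^[m] := by
        funext z
        induction m generalizing z with
        | zero => simp
        | succ m ih =>
          rw [Function.iterate_succ_apply, ← ih, hf]
          rw [← pow_mul, ← pow_succ']
      rw [this]
      exact Function.Injective.iterate hperf.1 m
    have hdiff : ∀ m : ℕ, b - s x ∈ I ^ (m + 1) := by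
      intro m
      obtain ⟨y, hym⟩ := hy (m + 1)
      have hmk : Ideal.Quotient.mk I y = g^[m + 1] x := by
        apply hfinj (m + 1)
        show (Ideal.Quotient.mk I y) ^ p ^ (m + 1) = (g^[m + 1] x) ^ p ^ (m + 1)
        rw [← map_pow, hym, hb, hgit]
      have h1 : y - l (g^[m + 1] x) ∈ I ^ 1 := hlift _ _ (by rw [hmk, hl])
      have h2 : y ^ p ^ (m + 1) - u x (m + 1) ∈ I ^ (m + 2) := by
        have := keypow _ _ 0 (m + 1) h1
        simpa [hu, Nat.add_comm 1 (m + 1)] using this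
      rw [hym] at h2
      have h3 : u x (m + 1) - s x ∈ I ^ (m + 1) := hs x (m + 1)
      have := Ideal.add_mem _ (Ideal.pow_le_pow_right (by omega) h2) h3
      rwa [sub_add_sub_cancel] at this
    have : b - s x = 0 := hzero _ fun n => by
      cases n with
      | zero => simp
      | succ n => exact hdiff n
    exact sub_eq_zero.1 this
  exact ⟨s, hsec, fun x m => ⟨s (g^[m] x), hroot x m⟩, hsmul, huniq⟩

/-- Let `A` be a DVR with residue characteristic `p` and `B` a flat
`A`-algebra, complete with respect to `I = 𝔭_A B`, whose reduction `B ⧸ I` is a perfect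
ring of characteristic `p`.  Then there is a multiplicative section `s : B ⧸ I → B` of the
reduction map such that for every `x`, `s x` is the unique lift of `x` admitting
`p ^ m`-th roots in `B` for all `m`. -/
theorem statement1 (p : ℕ) [Fact p.Prime]
    (A : Type) [CommRing A] [IsDomain A] [IsDiscreteValuationRing A]
    (B : Type) [CommRing B] [Algebra A B] [Module.Flat A B]
    (I : Ideal B) (hI : I = (maximalIdeal A).map (algebraMap A B))
    [IsAdicComplete I B] [CharP (B ⧸ I) p]
    (hperf : Function.Bijective (fun x : B ⧸ I => x ^ p)) :
    ∃ s : B ⧸ I → B,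
      (∀ x : B ⧸ I, Ideal.Quotient.mk I (s x) = x) ∧
      (∀ (x : B ⧸ I) (m : ℕ), ∃ y : B, y ^ p ^ m = s x) ∧
      (∀ x y : B ⧸ I, s (x * y) = s x * s y) ∧
      (∀ (x : B ⧸ I) (b : B),
        Ideal.Quotient.mk I b = x → (∀ m : ℕ, ∃ y : B, y ^ p ^ m = b) → b = s x) := by
  have hpI : (p : B) ∈ I := by
    have h := CharP.cast_eq_zero (B ⧸ I) p
    rwa [← map_natCast (Ideal.Quotient.mk I), Ideal.Quotient.eq_zero_iff_mem] at h
  exact teich_aux p B I hpI hperf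
end

section
/- Let A be a discrete valuation ring with residue characteristic p and let B be a flat A-algebra, complete with respect to p_A·B, with B/p_A·B a perfect F_p-algebra. If B/p_A·B is a noetherian ring, then B is noetherian. -/
open Ideal

theorem aux_noeth {B : Type} [CommRing B] (π : B)
    [IsAdicComplete (Ideal.span {π}) B]
    (hnoeth : IsNoetherianRing (B ⧸ Ideal.span {π})) :
    IsNoetherianRing B := by
  set I : Ideal B := Ideal.span {π} with hIdef
  have hπI : π ∈ I := Ideal.mem_span_singleton_self π
  have hpow : ∀ n : ℕ, I ^ n = Ideal.span {π ^ n} := fun n => by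
    rw [hIdef, Ideal.span_singleton_pow]
  have hsmul : ∀ n : ℕ, (I ^ n • ⊤ : Submodule B B) = I ^ n := fun n => by
    rw [← Ideal.one_eq_top, smul_eq_mul, mul_one]
  rw [isNoetherianRing_iff_ideal_fg]
  intro J
  classical
  set mk := Ideal.Quotient.mk I with hmkdef
  -- the chain of "leading coefficient" ideals
  set K : ℕ → Ideal B := fun n => (J ⊔ I ^ (n + 1)).colon (Ideal.span {π ^ n}) with hKdef
  have hKmem : ∀ (n : ℕ) (b : B), b ∈ K n ↔ π ^ n * b ∈ J ⊔ I ^ (n + 1) := by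
    intro n b
    rw [hKdef]
    rw [Ideal.mem_colon_span_singleton, mul_comm]
  have hKmono : ∀ n, K n ≤ K (n + 1) := by
    intro n b hb
    rw [hKmem] at hb ⊢
    obtain ⟨j, hj, z, hz, hsum⟩ := Submodule.mem_sup.mp hb
    have hz' : π * z ∈ I ^ (n + 2) := by
      rw [pow_succ']
      exact Ideal.mul_mem_mul hπI hz
    refine Submodule.mem_sup.mpr ⟨π * j, J.mul_mem_left π hj, π * z, hz', ?_⟩
    rw [← mul_add, hsum, ← mul_assoc, ← pow_succ']
  -- stabilization of the image chain in the noetherian quotient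
  have hmono : Monotone fun n => (K n).map mk :=
    monotone_nat_of_le_succ fun n => Ideal.map_mono (hKmono n)
  obtain ⟨N, hN⟩ := (monotone_stabilizes_iff_noetherian.mpr hnoeth)
    ⟨fun n => (K n).map mk, hmono⟩
  -- choose finite generating sets with good lifts
  have hT : ∀ n : ℕ, ∃ T : Finset B, (∀ b ∈ T, π ^ n * b ∈ J) ∧
      (K n).map mk ≤ Ideal.span ((T.image mk : Finset (B ⧸ I)) : Set (B ⧸ I)) := by
    intro n
    obtain ⟨G, hG⟩ := IsNoetherian.noetherian ((K n).map mk)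
    have hlift : ∀ g ∈ G, ∃ b : B, π ^ n * b ∈ J ∧ mk b = g := by
      intro g hg
      have hg' : g ∈ (K n).map mk := by
        rw [← hG]; exact Ideal.subset_span hg
      obtain ⟨b, hb, rfl⟩ :=
        (Ideal.mem_map_iff_of_surjective mk Ideal.Quotient.mk_surjective).mp hg'
      rw [hKmem] at hb
      obtain ⟨j, hj, z, hz, hsum⟩ := Submodule.mem_sup.mp hb
      rw [hpow (n + 1), Ideal.mem_span_singleton] at hz
      obtain ⟨c, rfl⟩ := hz
      refine ⟨b - π * c, ?_, ?_⟩
      · have h : π ^ n * (b - π * c) = j := by linear_combination -hsum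
        rw [h]; exact hj
      · have hmem : π * c ∈ I := I.mul_mem_right c hπI
        rw [map_sub, Ideal.Quotient.eq_zero_iff_mem.mpr hmem, sub_zero]
    choose bfun hbJ hbmk using hlift
    refine ⟨G.attach.image (fun g => bfun g.1 g.2), ?_, ?_⟩
    · intro b hb
      simp only [Finset.mem_image, Finset.mem_attach, true_and, Subtype.exists] at hb
      obtain ⟨g, hg, rfl⟩ := hb
      exact hbJ _ _
    · rw [← hG]
      refine Ideal.span_le.mpr ?_
      intro g hg
      refine Ideal.subset_span ?_
      simp only [Finset.coe_image, Set.mem_image, Finset.mem_coe]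
      exact ⟨bfun g hg, ⟨⟨g, hg⟩, Finset.mem_attach _ _, rfl⟩, hbmk g hg⟩
  choose T hTJ hTspan using hT
  -- the finitely many generators
  set gen : (Σ _ : ℕ, B) → B := fun i => π ^ i.1 * i.2 with hgendef
  set ι : Finset (Σ _ : ℕ, B) := (Finset.range (N + 1)).sigma (fun n => T n) with hιdef
  set S : Ideal B := Ideal.span ((ι.image gen : Finset B) : Set B) with hSdef
  have hgenJ : ∀ i ∈ ι, gen i ∈ J := by
    intro i hi
    rw [hιdef, Finset.mem_sigma] at hi
    exact hTJ i.1 i.2 hi.2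
  have hgenS : ∀ i ∈ ι, gen i ∈ S := fun i hi => Ideal.subset_span (by
    simp only [Finset.coe_image, Set.mem_image, Finset.mem_coe]
    exact ⟨i, hi, rfl⟩)
  have hSJ : S ≤ J := by
    rw [hSdef, Ideal.span_le]
    intro x hx
    simp only [Finset.coe_image, Set.mem_image, Finset.mem_coe] at hx
    obtain ⟨i, hi, rfl⟩ := hx
    exact hgenJ i hi
  -- the approximation step
  have step : ∀ (m : ℕ) (y : B), y ∈ J → y ∈ I ^ m →
      ∃ c : (Σ _ : ℕ, B) → B, (∀ i ∈ ι, c i ∈ I ^ (m - N)) ∧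
        y - (∑ i ∈ ι, c i * gen i) ∈ J ∧ y - (∑ i ∈ ι, c i * gen i) ∈ I ^ (m + 1) := by
    intro m y hyJ hym
    set n' := min m N with hn'def
    have hn'm : n' ≤ m := min_le_left _ _
    have hn'N : n' ≤ N := min_le_right _ _
    rw [hpow m, Ideal.mem_span_singleton] at hym
    obtain ⟨d, hd⟩ := hym
    have hdK : d ∈ K m := by
      rw [hKmem, ← hd]
      exact Submodule.mem_sup_left hyJ
    have hmaple : (K m).map mk ≤ (K n').map mk := by
      rcases le_total m N with h | h
      · rw [hn'def, min_eq_left h]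
      · rw [hn'def, min_eq_right h]
        exact (hN m h).ge
    have hmkd : mk d ∈ (Ideal.span ((T n' : Finset B) : Set B)).map mk := by
      rw [Ideal.map_span, ← Finset.coe_image]
      exact hTspan n' (hmaple (Ideal.mem_map_of_mem mk hdK))
    obtain ⟨u, hu, hud⟩ :=
      (Ideal.mem_map_iff_of_surjective mk Ideal.Quotient.mk_surjective).mp hmkd
    have hdu : d - u ∈ I := by
      have h1 : u - d ∈ I := Ideal.Quotient.eq.mp hud
      simpa using I.neg_mem h1
    rw [← Ideal.submodule_span_eq] at hu
    obtain ⟨f, -, hf⟩ := Submodule.mem_span_finset.mp hu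
    have hf' : (∑ b ∈ T n', f b * b) = u := by
      rw [← hf]
      exact Finset.sum_congr rfl fun b _ => (smul_eq_mul (α := B) _ _).symm
    set c : (Σ _ : ℕ, B) → B := fun i => if i.1 = n' then π ^ (m - n') * f i.2 else 0
      with hcdef
    have hcsum : (∑ i ∈ ι, c i * gen i) = π ^ m * u := by
      rw [hιdef, Finset.sum_sigma]
      rw [Finset.sum_eq_single_of_mem n' (Finset.mem_range.mpr (Nat.lt_succ_of_le hn'N))]
      · calc (∑ b ∈ T n', c ⟨n', b⟩ * gen ⟨n', b⟩)
            = ∑ b ∈ T n', π ^ m * (f b * b) := by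
              refine Finset.sum_congr rfl fun b _ => ?_
              simp only [hcdef, hgendef, if_pos]
              rw [show π ^ (m - n') * f b * (π ^ n' * b)
                  = (π ^ (m - n') * π ^ n') * (f b * b) by ring,
                pow_sub_mul_pow π hn'm]
          _ = π ^ m * ∑ b ∈ T n', f b * b := by rw [Finset.mul_sum]
          _ = π ^ m * u := by rw [hf']
      · intro n _ hne
        refine Finset.sum_eq_zero fun b _ => ?_
        simp [hcdef, hne]
    refine ⟨c, ?_, ?_, ?_⟩
    · intro i _
      rw [hcdef]
      dsimp only
      split
      · refine Ideal.pow_le_pow_right (Nat.sub_le_sub_left hn'N m) ?_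
        exact Ideal.mul_mem_right _ _ (Ideal.pow_mem_pow hπI _)
      · exact Submodule.zero_mem _
    · refine Submodule.sub_mem _ hyJ ?_
      exact Submodule.sum_mem _ fun i hi => J.mul_mem_left _ (hgenJ i hi)
    · have hy' : y - (∑ i ∈ ι, c i * gen i) = π ^ m * (d - u) := by
        rw [hcsum, hd]; ring
      rw [hy', pow_succ]
      exact Ideal.mul_mem_mul (Ideal.pow_mem_pow hπI m) hdu
  -- it suffices to show J ≤ S
  suffices hJS : J ≤ S by
    exact ⟨ι.image gen, by rw [← hSdef]; exact le_antisymm hSJ hJS⟩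
  intro y₀ hy₀
  -- construct the successive approximations
  have next : ∀ (m : ℕ) (d : {y : B // y ∈ J ∧ y ∈ I ^ m}),
      ∃ p : {y : B // y ∈ J ∧ y ∈ I ^ (m + 1)} × ((Σ _ : ℕ, B) → B),
        (∀ i ∈ ι, p.2 i ∈ I ^ (m - N)) ∧ d.1 - (∑ i ∈ ι, p.2 i * gen i) = p.1.1 := by
    intro m d
    obtain ⟨c, hc, h1, h2⟩ := step m d.1 d.2.1 d.2.2
    exact ⟨⟨⟨d.1 - _, h1, h2⟩, c⟩, hc, rfl⟩
  choose nextF hnext1 hnext2 using next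
  let F : (m : ℕ) → {y : B // y ∈ J ∧ y ∈ I ^ m} :=
    fun m => Nat.rec ⟨y₀, hy₀, by rw [pow_zero, Ideal.one_eq_top]; exact Submodule.mem_top⟩
      (fun m d => (nextF m d).1) m
  set C : ℕ → ((Σ _ : ℕ, B) → B) := fun m => (nextF m (F m)).2 with hCdef
  have hFrec : ∀ m, (F m).1 - (∑ i ∈ ι, C m i * gen i) = (F (m + 1)).1 :=
    fun m => hnext2 m (F m)
  have hCmem : ∀ m, ∀ i ∈ ι, C m i ∈ I ^ (m - N) := fun m => hnext1 m (F m)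
  set t : ℕ → ((Σ _ : ℕ, B) → B) := fun m i => ∑ k ∈ Finset.range m, C k i with htdef
  have htel : ∀ m, y₀ - (∑ i ∈ ι, t m i * gen i) = (F m).1 := by
    intro m
    induction m with
    | zero => simp [htdef, F]
    | succ m ih =>
      rw [← hFrec m, ← ih]
      simp only [htdef, Finset.sum_range_succ]
      have h : (∑ i ∈ ι, (((∑ k ∈ Finset.range m, C k i) + C m i) * gen i))
          = (∑ i ∈ ι, (∑ k ∈ Finset.range m, C k i) * gen i)
            + (∑ i ∈ ι, C m i * gen i) := by
        rw [← Finset.sum_add_distrib]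
        exact Finset.sum_congr rfl fun i _ => by ring
      rw [h]
      ring
  -- take limits of the coefficients
  have hlim : ∀ i ∈ ι, ∃ γ : B,
      ∀ m, t (m + N) i ≡ γ [SMOD (I ^ m • ⊤ : Submodule B B)] := by
    intro i hi
    refine IsPrecomplete.prec (inferInstance : IsPrecomplete I B) ?_
    intro m n hmn
    rw [SModEq.sub_mem, hsmul]
    have h1 : t (n + N) i - t (m + N) i = ∑ k ∈ Finset.Ico (m + N) (n + N), C k i :=
      (Finset.sum_Ico_eq_sub _ (by omega)).symm
    have h2 : (∑ k ∈ Finset.Ico (m + N) (n + N), C k i) ∈ I ^ m := by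
      refine Submodule.sum_mem _ fun k hk => ?_
      have hk' : m + N ≤ k := (Finset.mem_Ico.mp hk).1
      exact Ideal.pow_le_pow_right (by omega) (hCmem k i hi)
    rw [show t (m + N) i - t (n + N) i = -(t (n + N) i - t (m + N) i) by ring, h1]
    exact Submodule.neg_mem _ h2
  choose γ hγ using hlim
  have hmemS : (∑ i ∈ ι.attach, γ i.1 i.2 * gen i.1) ∈ S :=
    Submodule.sum_mem _ fun i _ => Ideal.mul_mem_left _ _ (hgenS i.1 i.2)
  have hzero : y₀ - (∑ i ∈ ι.attach, γ i.1 i.2 * gen i.1) = 0 := by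
    refine IsHausdorff.haus (inferInstance : IsHausdorff I B) _ fun m => ?_
    rw [SModEq.zero, hsmul]
    have h1 : y₀ - (∑ i ∈ ι, t (m + N) i * gen i) ∈ I ^ m := by
      rw [htel]
      exact Ideal.pow_le_pow_right (Nat.le_add_right m N) (F (m + N)).2.2
    have h2 : (∑ i ∈ ι.attach, (t (m + N) i.1 - γ i.1 i.2) * gen i.1) ∈ I ^ m := by
      refine Submodule.sum_mem _ fun i _ => Ideal.mul_mem_right _ _ ?_
      have h := hγ i.1 i.2 m
      rwa [SModEq.sub_mem, hsmul] at h
    have hsplit : y₀ - (∑ i ∈ ι.attach, γ i.1 i.2 * gen i.1)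
        = (y₀ - (∑ i ∈ ι, t (m + N) i * gen i))
          + (∑ i ∈ ι.attach, (t (m + N) i.1 - γ i.1 i.2) * gen i.1) := by
      rw [← Finset.sum_attach ι (fun i => t (m + N) i * gen i)]
      have h3 : (∑ i ∈ ι.attach, (t (m + N) i.1 - γ i.1 i.2) * gen i.1)
          = (∑ i ∈ ι.attach, t (m + N) i.1 * gen i.1)
            - (∑ i ∈ ι.attach, γ i.1 i.2 * gen i.1) := by
        rw [← Finset.sum_sub_distrib]
        exact Finset.sum_congr rfl fun i _ => by ring
      rw [h3]
      ring
    rw [hsplit]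
    exact Submodule.add_mem _ h1 h2
  have hy₀eq : y₀ = ∑ i ∈ ι.attach, γ i.1 i.2 * gen i.1 := sub_eq_zero.mp hzero
  rw [hy₀eq]
  exact hmemS

open IsLocalRing

/-- Let `A` be a DVR with residue characteristic `p` and `B` a flat
`A`-algebra, complete with respect to `I = 𝔭_A B`, with perfect reduction `B ⧸ I` of
characteristic `p`.  If the reduction `B ⧸ I` is noetherian, then `B` is noetherian. -/
theorem statement3 (p : ℕ) [Fact p.Prime]
    (A : Type) [CommRing A] [IsDomain A] [IsDiscreteValuationRing A]
    (B : Type) [CommRing B] [Algebra A B] [Module.Flat A B]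
    (I : Ideal B) (hI : I = (maximalIdeal A).map (algebraMap A B))
    [IsAdicComplete I B] [CharP (B ⧸ I) p]
    (hperf : Function.Bijective (fun x : B ⧸ I => x ^ p))
    (hnoeth : IsNoetherianRing (B ⧸ I)) :
    IsNoetherianRing B := by
  obtain ⟨ϖ, hϖ⟩ := IsDiscreteValuationRing.exists_irreducible A
  have hI' : I = Ideal.span {algebraMap A B ϖ} := by
    rw [hI, hϖ.maximalIdeal_eq, Ideal.map_span, Set.image_singleton]
  haveI : IsAdicComplete (Ideal.span {algebraMap A B ϖ}) B := hI' ▸ ‹IsAdicComplete I B›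
  exact aux_noeth (algebraMap A B ϖ) (hI' ▸ hnoeth)
end

section
/- Let A be a discrete valuation ring with residue characteristic p and let B be a flat A-algebra, complete with respect to p_A·B, with B/p_A·B perfect. If B/p_A·B is an integral domain, then B is an integral domain. -/
open IsLocalRing

/-- Let `A` be a DVR with residue characteristic `p` and `B` a flat
`A`-algebra, complete with respect to `I = 𝔭_A B`, with perfect reduction `B ⧸ I` of
characteristic `p`.  If the reduction `B ⧸ I` is an integral domain, then `B` is an integral domain. -/
theorem statement4 (p : ℕ) [Fact p.Prime]
    (A : Type) [CommRing A] [IsDomain A] [IsDiscreteValuationRing A]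
    (B : Type) [CommRing B] [Algebra A B] [Module.Flat A B]
    (I : Ideal B) (hI : I = (maximalIdeal A).map (algebraMap A B))
    [IsAdicComplete I B] [CharP (B ⧸ I) p]
    (hperf : Function.Bijective (fun x : B ⧸ I => x ^ p))
    (hdom : IsDomain (B ⧸ I)) :
    IsDomain B := by
  obtain ⟨π, hπ⟩ := IsDiscreteValuationRing.exists_irreducible A
  have hmax := (IsDiscreteValuationRing.irreducible_iff_uniformizer π).mp hπ
  set ϖ : B := algebraMap A B π with hϖ
  have hIspan : I = Ideal.span {ϖ} := by
    rw [hI, hmax, Ideal.map_span]; simp [hϖ]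
  -- π is regular on A, hence on B by flatness
  have hπA : IsSMulRegular A π := fun x y h =>
    mul_left_cancel₀ hπ.ne_zero (by simpa [smul_eq_mul] using h)
  have hregB : IsSMulRegular B π :=
    (hπA.rTensor B).of_injective (TensorProduct.lid A B).symm.toLinearMap
      (TensorProduct.lid A B).symm.injective
  have hreg : ∀ x : B, ϖ * x = 0 → x = 0 := by
    intro x hx
    have h2 : π • x = π • (0 : B) := by
      rw [Algebra.smul_def, smul_zero]; exact hx
    simpa using hregB h2
  have hregpow : ∀ (k : ℕ) (x : B), ϖ ^ k * x = 0 → x = 0 := by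
    intro k
    induction k with
    | zero => intro x hx; simpa using hx
    | succ n ih =>
      intro x hx
      exact hreg x (ih _ (by rw [← hx]; ring))
  -- B is nontrivial
  have hnt : Nontrivial B := by
    refine nontrivial_of_ne 1 0 fun h => ?_
    have : (1 : B ⧸ I) = 0 := by
      rw [← map_one (Ideal.Quotient.mk I), h, map_zero]
    exact one_ne_zero this
  -- B is I-adically separated
  have hsep : ∀ x : B, (∀ n, x ∈ I ^ n) → x = 0 := by
    intro x hx
    refine IsHausdorff.haus (inferInstance : IsHausdorff I B) x fun n => ?_
    rw [SModEq.zero]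
    simpa using Submodule.smul_mem_smul (hx n) (Submodule.mem_top (x := (1 : B)))
  -- decomposition of nonzero elements
  have key : ∀ a : B, a ≠ 0 → ∃ (n : ℕ) (a' : B), a = ϖ ^ n * a' ∧ a' ∉ I := by
    intro a ha
    have hex : ∃ n, a ∉ I ^ n := by
      by_contra h
      push_neg at h
      exact ha (hsep a h)
    classical
    have hnot : a ∉ I ^ Nat.find hex := Nat.find_spec hex
    have hn0 : Nat.find hex ≠ 0 := by
      intro h0
      apply hnot
      rw [h0, pow_zero, Ideal.one_eq_top]
      exact Submodule.mem_top
    obtain ⟨m, hm⟩ := Nat.exists_eq_succ_of_ne_zero hn0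
    have hnot1 : a ∉ I ^ (m + 1) := by rw [← Nat.succ_eq_add_one, ← hm]; exact hnot
    have hmem : a ∈ I ^ m := by
      by_contra h
      have hle : Nat.find hex ≤ m := Nat.find_le h
      omega
    rw [hIspan, Ideal.span_singleton_pow, Ideal.mem_span_singleton] at hmem
    obtain ⟨a', rfl⟩ := hmem
    refine ⟨m, a', rfl, fun hmem' => ?_⟩
    apply hnot1
    rw [hIspan, Ideal.mem_span_singleton] at hmem'
    obtain ⟨c, rfl⟩ := hmem'
    rw [hIspan, Ideal.span_singleton_pow, Ideal.mem_span_singleton]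
    exact ⟨c, by ring⟩
  have hnzd : NoZeroDivisors B := by
    refine ⟨fun {a b} hab => ?_⟩
    by_contra h
    push_neg at h
    obtain ⟨ha, hb⟩ := h
    obtain ⟨m, a', rfl, ha'⟩ := key a ha
    obtain ⟨n, b', rfl, hb'⟩ := key b hb
    have h0 : ϖ ^ (m + n) * (a' * b') = 0 := by rw [← hab]; ring
    have hab' : a' * b' = 0 := hregpow _ _ h0
    have hq : (Ideal.Quotient.mk I a') * (Ideal.Quotient.mk I b') = 0 := by
      rw [← map_mul, hab', map_zero]
    haveI := hdom
    rcases mul_eq_zero.mp hq with hc | hc <;>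
      rw [Ideal.Quotient.eq_zero_iff_mem] at hc
    · exact ha' hc
    · exact hb' hc
  exact NoZeroDivisors.to_isDomain B
end

section
/- Let Q ⊆ A be an extension of discrete valuation rings of ramification index one with Q residually perfect and A/Q formally smooth, let T ⊂ A be a lift of a p-basis of the residue field of A, let B be a Q-algebra complete with respect to an ideal I containing the image of the maximal ideal of Q, and let φ': A → B/I^n be a Q-algebra map for some n ≥ 1. Then for any choice of lifts x_t ∈ B of φ'(t) for t ∈ T, there exists a unique Q-algebra homomorphism φ: A → B with φ ≡ φ' (mod I^n) and φ(t) = x_t for all t ∈ T. -/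
open IsLocalRing TensorProduct

theorem keyDer (Q : Type) [CommRing Q]
    (A : Type) [CommRing A] [IsLocalRing A] [Algebra Q A]
    (T : Set A)
    (bT : Module.Basis T (ResidueField A) (ResidueField A ⊗[A] Ω[A⁄Q]))
    (hbT : ∀ t : T, bT t = (1 : ResidueField A) ⊗ₜ[A] (KaehlerDifferential.D Q A (t : A)))
    (M : Type) [AddCommGroup M] [Module A M] [Module Q M] [IsScalarTower Q A M]
    (hM : ∀ a ∈ maximalIdeal A, ∀ m : M, a • m = 0)
    (v : T → M) :
    ∃! d : Derivation Q A M, ∀ t : T, d t = v t := by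
  have htor : Module.IsTorsionBySet A M (maximalIdeal A : Ideal A) := by
    intro m a; exact hM a.1 a.2 m
  letI : Module (ResidueField A) M := htor.module
  haveI : IsScalarTower A (ResidueField A) M := htor.isScalarTower
  set k := ResidueField A
  let e := KaehlerDifferential.linearMapEquivDerivation Q A (M := M)
  let l : Ω[A⁄Q] →ₗ[A] M :=
    ((bT.constr k v).restrictScalars A).comp (TensorProduct.mk A k (Ω[A⁄Q]) 1)
  have hl : ∀ t : T, l (KaehlerDifferential.D Q A (t : A)) = v t := by
    intro t
    show (bT.constr k v) ((1 : k) ⊗ₜ[A] (KaehlerDifferential.D Q A (t : A))) = v t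
    rw [← hbT t, Module.Basis.constr_basis]
  have hed : ∀ (l' : Ω[A⁄Q] →ₗ[A] M) (a : A), e l' a = l' (KaehlerDifferential.D Q A a) := by
    intro l' a; rfl
  have hed' : ∀ (d : Derivation Q A M) (a : A), (e.symm d) (KaehlerDifferential.D Q A a) = d a := by
    intro d a
    conv_rhs => rw [← e.apply_symm_apply d]
    rw [hed]
  refine ⟨e l, fun t => by rw [hed, hl], ?_⟩
  intro d' hd'
  have hll : e.symm d' = l := by
    have hg : LinearMap.liftBaseChange k ((e.symm d' : Ω[A⁄Q] →ₗ[A] M) - l) = 0 := by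
      apply bT.ext
      intro t
      rw [hbT t, LinearMap.liftBaseChange_tmul, one_smul, LinearMap.sub_apply, hl, hed',
        hd' t, sub_self, LinearMap.zero_apply]
    refine LinearMap.ext fun ω => ?_
    have h2 := congrArg (fun g => g ((1 : k) ⊗ₜ[A] ω)) hg
    simp only [LinearMap.liftBaseChange_tmul, one_smul, LinearMap.sub_apply,
      LinearMap.zero_apply] at h2
    exact sub_eq_zero.mp h2
  have := congrArg e hll
  rwa [e.apply_symm_apply] at this

theorem stepLift (Q : Type) [CommRing Q] [IsLocalRing Q]
    (A : Type) [CommRing A] [IsLocalRing A] [Algebra Q A] [Algebra.FormallySmooth Q A]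
    (he : (maximalIdeal Q).map (algebraMap Q A) = maximalIdeal A)
    (T : Set A)
    (bT : Module.Basis T (ResidueField A) (ResidueField A ⊗[A] Ω[A⁄Q]))
    (hbT : ∀ t : T, bT t = (1 : ResidueField A) ⊗ₜ[A] (KaehlerDifferential.D Q A (t : A)))
    (C₁ C₂ : Type) [CommRing C₁] [CommRing C₂] [Algebra Q C₁] [Algebra Q C₂]
    (π : C₁ →ₐ[Q] C₂) (hπ : Function.Surjective π)
    (hsq : (RingHom.ker π) ^ 2 = ⊥)
    (hmk : ∀ c ∈ (maximalIdeal Q).map (algebraMap Q C₁), ∀ z ∈ RingHom.ker π, c * z = 0)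
    (ψ : A →ₐ[Q] C₂) (w : T → C₁) (hw : ∀ t : T, π (w t) = ψ (t : A)) :
    ∃! φ : A →ₐ[Q] C₁, π.comp φ = ψ ∧ ∀ t : T, φ (t : A) = w t := by
  set J : Ideal C₁ := RingHom.ker π with hJ
  have hnil : IsNilpotent J := ⟨2, hsq⟩
  let eiso : (C₁ ⧸ J) ≃ₐ[Q] C₂ := Ideal.quotientKerAlgEquivOfSurjective hπ
  have heiso : ∀ z : C₁, eiso (Ideal.Quotient.mk J z) = π z := fun z => rfl
  let χ₀ : A →ₐ[Q] C₁ := Algebra.FormallySmooth.lift J hnil (eiso.symm.toAlgHom.comp ψ)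
  have hχmk : ∀ a : A, Ideal.Quotient.mk J (χ₀ a) = eiso.symm (ψ a) := by
    intro a
    have := congrArg (fun f => f a)
      (Algebra.FormallySmooth.comp_lift J hnil (eiso.symm.toAlgHom.comp ψ))
    exact this
  have hχ₀ : ∀ a : A, π (χ₀ a) = ψ a := by
    intro a
    rw [← heiso (χ₀ a), hχmk a, AlgEquiv.apply_symm_apply]
  letI : Algebra A C₁ := χ₀.toRingHom.toAlgebra
  have halg : ∀ a : A, algebraMap A C₁ a = χ₀ a := fun a => rfl
  haveI : IsScalarTower Q A C₁ := IsScalarTower.of_algebraMap_eq' (χ₀.comp_algebraMap).symm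
  have hM : ∀ a ∈ maximalIdeal A, ∀ m : ↥J, a • m = 0 := by
    intro a ha m
    have haJ : χ₀ a ∈ (maximalIdeal Q).map (algebraMap Q C₁) := by
      rw [← he] at ha
      have hcomp : χ₀.toRingHom.comp (algebraMap Q A) = algebraMap Q C₁ := by
        ext q; exact χ₀.commutes q
      have := Ideal.mem_map_of_mem χ₀.toRingHom ha
      rwa [Ideal.map_map, hcomp] at this
    ext
    show a • (m : C₁) = (0 : C₁)
    rw [Algebra.smul_def, halg a]
    exact hmk _ haJ _ m.2
  have hvmem : ∀ t : T, w t - χ₀ (t : A) ∈ J := by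
    intro t
    have : π (w t - χ₀ (t : A)) = 0 := by
      rw [map_sub, hw t, hχ₀]; ring
    exact this
  set v : T → ↥J := fun t => ⟨w t - χ₀ (t : A), hvmem t⟩ with hv
  obtain ⟨d, hd, hdu⟩ := keyDer Q A T bT hbT (↥J) hM v
  refine ⟨liftOfDerivationToSquareZero J hsq d, ⟨?_, ?_⟩, ?_⟩
  · ext a
    rw [AlgHom.comp_apply, liftOfDerivationToSquareZero_apply, map_add,
      RingHom.mem_ker.mp (d a).2, zero_add, halg a, hχ₀ a]
  · intro t
    rw [liftOfDerivationToSquareZero_apply, hd t]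
    show (w t - χ₀ (t : A)) + algebraMap A C₁ (t : A) = w t
    rw [halg]; ring
  · intro φ₁ ⟨hφc, hφt⟩
    have hce : (Ideal.Quotient.mkₐ Q J).comp φ₁ = IsScalarTower.toAlgHom Q A (C₁ ⧸ J) := by
      ext a
      show Ideal.Quotient.mk J (φ₁ a) = algebraMap A (C₁ ⧸ J) a
      have : algebraMap A (C₁ ⧸ J) a = Ideal.Quotient.mk J (χ₀ a) := rfl
      rw [this, Ideal.Quotient.eq]
      show φ₁ a - χ₀ a ∈ RingHom.ker π
      rw [RingHom.mem_ker, map_sub, hχ₀ a, ← AlgHom.comp_apply, hφc, sub_self]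
    set D₁ := derivationToSquareZeroOfLift J hsq φ₁ hce with hD₁
    have hDv : ∀ t : T, D₁ t = v t := by
      intro t
      ext
      rw [derivationToSquareZeroOfLift_apply]
      show φ₁ (t : A) - algebraMap A C₁ (t : A) = w t - χ₀ (t : A)
      rw [halg, hφt t]
    have hDd : D₁ = d := hdu D₁ hDv
    ext a
    have h1 : (D₁ a : C₁) = φ₁ a - algebraMap A C₁ a :=
      derivationToSquareZeroOfLift_apply J hsq φ₁ hce a
    rw [liftOfDerivationToSquareZero_apply, ← hDd, h1]
    ring

/-- Let `Q ⊆ A` be an extension of DVRs of ramification index one with `Q`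
residually perfect (so `A / Q` is formally smooth), let `T ⊂ A` be a lift of a `p`-basis
of the residue field `k` of `A` (i.e. the classes `1 ⊗ dt`, `t ∈ T`, form a `k`-basis of
`k ⊗_A Ω¹_{A/Q}`), let `B` be a `Q`-algebra complete with respect to an ideal `I`
containing the image of the maximal ideal of `Q`, and let `φ' : A → B ⧸ I ^ n` be a
`Q`-algebra map, `n ≥ 1`.  Then for any choice of lifts `x t ∈ B` of `φ' t` (`t ∈ T`)
there is a unique `Q`-algebra homomorphism `φ : A → B` reducing to `φ'` modulo `I ^ n`
with `φ t = x t` for all `t ∈ T`. -/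
theorem statement6 (p : ℕ) [Fact p.Prime]
    (Q : Type) [CommRing Q] [IsDomain Q] [IsDiscreteValuationRing Q]
    [CharP (ResidueField Q) p]
    (hQperf : Function.Bijective (fun x : ResidueField Q => x ^ p))
    (A : Type) [CommRing A] [IsDomain A] [IsDiscreteValuationRing A]
    [Algebra Q A] (hinj : Function.Injective (algebraMap Q A))
    (he : (maximalIdeal Q).map (algebraMap Q A) = maximalIdeal A)
    [Algebra.FormallySmooth Q A]
    (T : Set A)
    (bT : Module.Basis T (ResidueField A) (ResidueField A ⊗[A] Ω[A⁄Q]))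
    (hbT : ∀ t : T, bT t = (1 : ResidueField A) ⊗ₜ[A] (KaehlerDifferential.D Q A (t : A)))
    (B : Type) [CommRing B] [Algebra Q B]
    (I : Ideal B) [IsAdicComplete I B]
    (hIm : (maximalIdeal Q).map (algebraMap Q B) ≤ I)
    (n : ℕ) (hn : 1 ≤ n)
    (φ' : A →ₐ[Q] B ⧸ (I ^ n))
    (x : T → B) (hx : ∀ t : T, Ideal.Quotient.mk (I ^ n) (x t) = φ' (t : A)) :
    ∃! φ : A →ₐ[Q] B,
      (Ideal.Quotient.mkₐ Q (I ^ n)).comp φ = φ' ∧ ∀ t : T, φ (t : A) = x t := by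
  classical
  have hle : ∀ j k : ℕ, j ≤ k → I ^ k ≤ I ^ j := fun j k h => Ideal.pow_le_pow_right h
  let πs : ∀ m : ℕ, (B ⧸ I ^ (n + m + 1)) →ₐ[Q] B ⧸ I ^ (n + m) := fun m =>
    { Ideal.Quotient.factor (hle _ _ (Nat.le_succ _)) with commutes' := fun q => rfl }
  have hπmk : ∀ (m : ℕ) (u : B),
      πs m (Ideal.Quotient.mk (I ^ (n + m + 1)) u) = Ideal.Quotient.mk (I ^ (n + m)) u :=
    fun m u => Ideal.Quotient.factor_mk (hle _ _ (Nat.le_succ _)) u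
  have hπsurj : ∀ m, Function.Surjective (πs m) := by
    intro m z
    obtain ⟨u, rfl⟩ := Ideal.Quotient.mk_surjective z
    exact ⟨Ideal.Quotient.mk _ u, hπmk m u⟩
  have hkermem : ∀ (m : ℕ) (z : B ⧸ I ^ (n + m + 1)), z ∈ RingHom.ker (πs m) →
      ∃ u ∈ I ^ (n + m), Ideal.Quotient.mk (I ^ (n + m + 1)) u = z := by
    intro m z hz
    obtain ⟨u, rfl⟩ := Ideal.Quotient.mk_surjective z
    refine ⟨u, ?_, rfl⟩
    have h0 : πs m (Ideal.Quotient.mk _ u) = 0 := hz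
    rw [hπmk] at h0
    exact Ideal.Quotient.eq_zero_iff_mem.mp h0
  have hsq : ∀ m : ℕ, (RingHom.ker (πs m)) ^ 2 = ⊥ := by
    intro m
    rw [eq_bot_iff, pow_two]
    refine Ideal.mul_le.mpr ?_
    intro a ha b hb
    obtain ⟨u, hu, rfl⟩ := hkermem m a ha
    obtain ⟨v, hv, rfl⟩ := hkermem m b hb
    rw [Ideal.mem_bot, ← map_mul, Ideal.Quotient.eq_zero_iff_mem]
    have huv : u * v ∈ I ^ ((n + m) + (n + m)) := by
      rw [pow_add]; exact Ideal.mul_mem_mul hu hv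
    exact hle _ _ (by omega) huv
  have hmkI : ∀ m : ℕ, ∀ c ∈ (maximalIdeal Q).map (algebraMap Q (B ⧸ I ^ (n + m + 1))),
      ∀ z ∈ RingHom.ker (πs m), c * z = 0 := by
    intro m c hc z hz
    obtain ⟨v, hv, rfl⟩ := hkermem m z hz
    have hcomp : (Ideal.Quotient.mk (I ^ (n + m + 1))).comp (algebraMap Q B) =
        algebraMap Q (B ⧸ I ^ (n + m + 1)) := by ext q; rfl
    have hc2 : c ∈ Ideal.map (Ideal.Quotient.mk (I ^ (n + m + 1))) I := by
      have := hc
      rw [← hcomp, ← Ideal.map_map] at this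
      exact Ideal.map_mono hIm this
    obtain ⟨u, hu, rfl⟩ := Ideal.mem_map_iff_of_surjective _ Ideal.Quotient.mk_surjective |>.mp hc2
    rw [← map_mul, Ideal.Quotient.eq_zero_iff_mem]
    have : u * v ∈ I ^ (1 + (n + m)) := by
      rw [pow_add, pow_one]; exact Ideal.mul_mem_mul hu hv
    exact hle _ _ (by omega) this
  have hstep : ∀ (m : ℕ) (f : A →ₐ[Q] B ⧸ I ^ (n + m)),
      (∀ t : T, f (t : A) = Ideal.Quotient.mk (I ^ (n + m)) (x t)) →
      ∃! g : A →ₐ[Q] B ⧸ I ^ (n + m + 1),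
        (πs m).comp g = f ∧ ∀ t : T, g (t : A) = Ideal.Quotient.mk (I ^ (n + m + 1)) (x t) := by
    intro m f hf
    exact stepLift Q A he T bT hbT _ _ (πs m) (hπsurj m) (hsq m) (hmkI m) f
      (fun t => Ideal.Quotient.mk (I ^ (n + m + 1)) (x t))
      (fun t => (hπmk m (x t)).trans (hf t).symm)
  let Sfam : ℕ → Type := fun m =>
    {f : A →ₐ[Q] B ⧸ I ^ (n + m) // ∀ t : T, f (t : A) = Ideal.Quotient.mk (I ^ (n + m)) (x t)}
  let next : ∀ m, Sfam m → Sfam (m + 1) := fun m f =>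
    ⟨(hstep m f.1 f.2).exists.choose, fun t => (hstep m f.1 f.2).exists.choose_spec.2 t⟩
  let seq : ∀ m, Sfam m := fun m => Nat.rec ⟨φ', fun t => (hx t).symm⟩ next m
  have hcompat : ∀ m, (πs m).comp (seq (m + 1)).1 = (seq m).1 := fun m =>
    (hstep m (seq m).1 (seq m).2).exists.choose_spec.1
  choose rep hrep using fun (m : ℕ) (a : A) => Ideal.Quotient.mk_surjective ((seq m).1 a)
  have hagree : ∀ (d m : ℕ) (a : A),
      Ideal.Quotient.mk (I ^ (n + m)) (rep (m + d) a) = (seq m).1 a := by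
    intro d
    induction d with
    | zero => exact fun m a => hrep m a
    | succ d ih =>
      intro m a
      have h1 : m + (d + 1) = (m + 1) + d := by omega
      rw [h1]
      have h2 : Ideal.Quotient.mk (I ^ (n + m + 1)) (rep ((m + 1) + d) a) = (seq (m + 1)).1 a :=
        ih (m + 1) a
      calc Ideal.Quotient.mk (I ^ (n + m)) (rep ((m + 1) + d) a)
          = πs m (Ideal.Quotient.mk (I ^ (n + m + 1)) (rep ((m + 1) + d) a)) := (hπmk m _).symm
        _ = πs m ((seq (m + 1)).1 a) := by rw [h2]
        _ = (seq m).1 a := congrArg (fun f => f a) (hcompat m)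
  have hex : ∀ a : A, ∃ L : B, ∀ m, rep m a ≡ L [SMOD I ^ m • (⊤ : Submodule B B)] := by
    intro a
    refine IsPrecomplete.prec inferInstance ?_
    intro k l hkl
    rw [SModEq.sub_mem, smul_eq_mul, Ideal.mul_top]
    have h1 : Ideal.Quotient.mk (I ^ (n + k)) (rep k a) = (seq k).1 a := hrep k a
    have h2 : Ideal.Quotient.mk (I ^ (n + k)) (rep l a) = (seq k).1 a := by
      obtain ⟨d, rfl⟩ := Nat.exists_eq_add_of_le hkl
      exact hagree d k a
    exact hle _ _ (by omega) (Ideal.Quotient.eq.mp (h1.trans h2.symm))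
  choose Lf hL using hex
  have hLmk : ∀ (m : ℕ) (a : A),
      Ideal.Quotient.mk (I ^ (n + m)) (Lf a) = (seq m).1 a := by
    intro m a
    have h1 := hL a (n + m)
    rw [SModEq.sub_mem, smul_eq_mul, Ideal.mul_top] at h1
    have h2 : Ideal.Quotient.mk (I ^ (n + m)) (rep (n + m) a) = (seq m).1 a := by
      have h3 := hagree n m a
      rwa [show m + n = n + m by omega] at h3
    rw [← h2, Ideal.Quotient.eq]
    have := (I ^ (n + m)).neg_mem h1
    rwa [neg_sub] at this
  have hsep : ∀ b b' : B,
      (∀ m : ℕ, Ideal.Quotient.mk (I ^ (n + m)) b = Ideal.Quotient.mk (I ^ (n + m)) b') →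
      b = b' := by
    intro b b' h
    rw [← sub_eq_zero]
    refine IsHausdorff.haus (I := I) (M := B) inferInstance (b - b') ?_
    intro k
    rw [SModEq.zero, smul_eq_mul, Ideal.mul_top]
    exact hle _ _ (by omega : k ≤ n + k) (Ideal.Quotient.eq.mp (h k))
  let φ : A →ₐ[Q] B :=
    { toFun := Lf
      map_one' := hsep (Lf 1) 1 (fun m => by
        rw [hLmk m 1, map_one, map_one])
      map_mul' := fun a b => hsep (Lf (a * b)) (Lf a * Lf b) (fun m => by
        rw [hLmk m (a * b), map_mul, map_mul, hLmk m a, hLmk m b])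
      map_zero' := hsep (Lf 0) 0 (fun m => by
        rw [hLmk m 0, map_zero, map_zero])
      map_add' := fun a b => hsep (Lf (a + b)) (Lf a + Lf b) (fun m => by
        rw [hLmk m (a + b), map_add, map_add, hLmk m a, hLmk m b])
      commutes' := fun q => hsep (Lf (algebraMap Q A q)) (algebraMap Q B q) (fun m => by
        rw [hLmk m (algebraMap Q A q), AlgHom.commutes]; rfl) }
  have hφ : ∀ a : A, φ a = Lf a := fun a => rfl
  refine ⟨φ, ⟨?_, ?_⟩, ?_⟩
  · ext a
    exact hLmk 0 a
  · intro t
    exact hsep _ _ (fun m => by rw [hφ, hLmk m (t : A)]; exact (seq m).2 t)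
  · intro φ₂ hφ₂
    obtain ⟨h1, h2⟩ := hφ₂
    have hall : ∀ m, (Ideal.Quotient.mkₐ Q (I ^ (n + m))).comp φ₂ = (seq m).1 := by
      intro m
      induction m with
      | zero => exact h1
      | succ m ih =>
        refine (hstep m (seq m).1 (seq m).2).unique ⟨?_, ?_⟩
          ⟨(hstep m (seq m).1 (seq m).2).exists.choose_spec.1,
           fun t => (hstep m (seq m).1 (seq m).2).exists.choose_spec.2 t⟩
        · ext a
          show πs m (Ideal.Quotient.mk (I ^ (n + m + 1)) (φ₂ a)) = (seq m).1 a
          rw [hπmk]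
          exact congrArg (fun f => f a) ih
        · intro t
          show Ideal.Quotient.mk (I ^ (n + m + 1)) (φ₂ (t : A)) =
            Ideal.Quotient.mk (I ^ (n + m + 1)) (x t)
          rw [h2 t]
    ext a
    refine hsep _ _ (fun m => ?_)
    rw [hφ, hLmk m a]
    exact congrArg (fun f => f a) (hall m)
end

section
/- Let C be a complete discrete valuation ring of mixed characteristic (0,p) with absolute ramification index one, let g(X) ∈ C[X] be an Eisenstein polynomial, let W be the ring of Witt vectors of a perfect F_p-algebra S equipped with a ring map C → W, and let h be the image of g in W[[π̃]] under a continuous map C[X] → W[[π̃]] sending X to π̃. Then π̃ is not a zero-divisor in W[[π̃]]/(h). -/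
open IsLocalRing

private lemma witt_p_mul_eq_zero (p : ℕ) [Fact p.Prime] (S : Type) [CommRing S] [CharP S p]
    (hperf : Function.Bijective (fun x : S => x ^ p)) (x : WittVector p S)
    (hx : (p : WittVector p S) * x = 0) : x = 0 := by
  haveI : PerfectRing S p := ⟨by
    have : (frobenius S p : S → S) = fun x : S => x ^ p := funext fun x => frobenius_def p x
    exact hperf⟩
  have h1 : WittVector.verschiebung (WittVector.frobenius x) = 0 := by
    rw [WittVector.verschiebung_frobenius x, mul_comm, hx]
  have h2 : WittVector.frobenius x = (0 : WittVector p S) := by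
    ext n
    have := congrArg (fun y : WittVector p S => y.coeff (n + 1)) h1
    simpa [WittVector.verschiebung_coeff_succ] using this
  have := WittVector.frobenius_bijective p S
  apply this.injective
  simpa using h2

/-- Let `C` be a complete DVR of mixed characteristic `(0, p)` with absolute
ramification index one, `g ∈ C[X]` an Eisenstein polynomial, `S` a perfect `𝔽_p`-algebra,
`W = W(S)` its ring of `p`-typical Witt vectors, and `f : C → W` a ring map.  Let
`h ∈ W[[π̃]]` be the image of `g` under the map `C[X] → W[[π̃]]`, `X ↦ π̃`.  Then `π̃` is
not a zero-divisor in `W[[π̃]] ⧸ (h)`. -/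
theorem statement7 (p : ℕ) [Fact p.Prime]
    (C : Type) [CommRing C] [IsDomain C] [IsDiscreteValuationRing C] [CharZero C]
    [IsAdicComplete (maximalIdeal C) C]
    (habs : maximalIdeal C = Ideal.span {(p : C)})
    (g : Polynomial C) (hmonic : g.Monic) (hEis : g.IsEisensteinAt (maximalIdeal C))
    (S : Type) [CommRing S] [CharP S p]
    (hperf : Function.Bijective (fun x : S => x ^ p))
    (f : C →+* WittVector p S) :
    ∀ q : PowerSeries (WittVector p S) ⧸
        Ideal.span {((g.map f : Polynomial (WittVector p S)) : PowerSeries (WittVector p S))},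
      Ideal.Quotient.mk _ PowerSeries.X * q = 0 → q = 0 := by
  set W := WittVector p S
  set h : PowerSeries W := ((g.map f : Polynomial W) : PowerSeries W) with hh
  by_cases hd : g.natDegree = 0
  · -- g = 1, quotient is trivial
    have hg1 : g = 1 := hmonic.natDegree_eq_zero.mp hd
    have : Ideal.span {h} = ⊤ := by
      rw [hh, hg1]
      simp [Ideal.span_singleton_eq_top]
    haveI : Subsingleton (PowerSeries W ⧸ Ideal.span {h}) := by
      rw [Ideal.Quotient.subsingleton_iff]; exact this
    intro q _
    exact Subsingleton.elim _ _
  · -- main case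
    -- g.coeff 0 = p * u with u a unit
    have hg0mem : g.coeff 0 ∈ maximalIdeal C := hEis.mem (Nat.pos_of_ne_zero hd)
    rw [habs, Ideal.mem_span_singleton] at hg0mem
    obtain ⟨u, hu⟩ := hg0mem
    have huu : IsUnit u := by
      by_contra hnu
      apply hEis.notMem
      rw [habs]
      have hu2 : u ∈ Ideal.span {(p : C)} := by
        rw [← habs]; exact hnu
      rw [Ideal.mem_span_singleton] at hu2
      obtain ⟨v, hv⟩ := hu2
      rw [sq, Ideal.span_singleton_mul_span_singleton, Ideal.mem_span_singleton]
      exact ⟨v, by rw [hu, hv]; ring⟩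
    -- constant coefficient of h
    have hh0 : PowerSeries.constantCoeff (R := W) h = (p : W) * f u := by
      rw [hh, Polynomial.constantCoeff_coe, Polynomial.coeff_map, hu]
      simp
    -- h0 is a nonzerodivisor
    have hnzd : ∀ t : W, PowerSeries.constantCoeff (R := W) h * t = 0 → t = 0 := by
      intro t ht
      rw [hh0, mul_assoc] at ht
      have := witt_p_mul_eq_zero p S hperf _ ht
      have hfu : IsUnit (f u) := huu.map f
      obtain ⟨w, hw⟩ := hfu
      rwa [← hw, Units.mul_right_eq_zero] at this
    -- X cancellation in power series
    have hcancel : ∀ a b : PowerSeries W, PowerSeries.X * a = PowerSeries.X * b → a = b := by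
      intro a b hab
      refine PowerSeries.ext fun n => ?_
      have := congrArg (PowerSeries.coeff (R := W) (n + 1)) hab
      simpa [PowerSeries.coeff_succ_X_mul] using this
    intro q hq
    obtain ⟨Q, rfl⟩ := Ideal.Quotient.mk_surjective q
    rw [← map_mul, Ideal.Quotient.eq_zero_iff_mem, Ideal.mem_span_singleton] at hq
    obtain ⟨r, hr⟩ := hq
    -- constant coeff of r is zero
    have hr0 : PowerSeries.constantCoeff (R := W) r = 0 := by
      apply hnzd
      have := congrArg (PowerSeries.constantCoeff (R := W)) hr
      simpa using this.symm
    obtain ⟨r', hr'⟩ := PowerSeries.X_dvd_iff.mpr hr0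
    rw [hr', ← mul_assoc, mul_comm h, mul_assoc] at hr
    have hQ : Q = h * r' := hcancel _ _ hr
    rw [Ideal.Quotient.eq_zero_iff_mem, Ideal.mem_span_singleton]
    exact ⟨r', hQ⟩
end

section
/- Let A be a complete discrete valuation ring with residue characteristic p, and let B be a finite étale extension of A. If C is a flat A-algebra complete with respect to p_A·C with perfect reduction, then C ⊗_A B is a flat B-algebra complete with respect to p_B·(C⊗_A B) with perfect reduction. In particular a finite étale base change of an object of crp(A) is an object of crp(B). -/
set_option synthInstance.maxHeartbeats 1000000
set_option maxHeartbeats 1000000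

open IsLocalRing

/-- The category `crp(A)`: `B` is a flat `A`-algebra, complete with respect to `𝔭_A B`,
whose reduction `B ⧸ 𝔭_A B` is a perfect ring of characteristic `p`. -/
def IsCrp (p : ℕ) (A : Type) [CommRing A] [IsDomain A] [IsDiscreteValuationRing A]
    (B : Type) [CommRing B] [Algebra A B] : Prop :=
  Module.Flat A B ∧
  IsAdicComplete ((maximalIdeal A).map (algebraMap A B)) B ∧
  CharP (B ⧸ (maximalIdeal A).map (algebraMap A B)) p ∧
  Function.Bijective (fun x : B ⧸ (maximalIdeal A).map (algebraMap A B) => x ^ p)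

open scoped TensorProduct


/-- Transfer bijectivity of `x ↦ x ^ p` along a ring isomorphism. -/
private lemma bij_pow_transfer {Q D : Type*} [CommRing Q] [CommRing D] (e : Q ≃+* D)
    (p : ℕ) (h : Function.Bijective fun x : D => x ^ p) :
    Function.Bijective fun x : Q => x ^ p := by
  have hfun : (fun x : Q => x ^ p) = ⇑e.symm ∘ (fun x : D => x ^ p) ∘ ⇑e := by
    funext x
    simp [Function.comp, map_pow]
  rw [hfun]
  exact (e.symm.bijective.comp h).comp e.bijective

/-- If `D` has a finite basis over `S`, `S` is perfect of characteristic `p`, and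
the Frobenius of `D` is surjective, then it is bijective. -/
private lemma frobenius_bij_of_basis {S D : Type*} [CommRing S] [CommRing D] [Algebra S D]
    {p : ℕ} [Fact p.Prime] [CharP S p] [CharP D p]
    {ι : Type*} [Fintype ι] (b : Module.Basis ι S D)
    (hS : Function.Bijective fun x : S => x ^ p)
    (hsurj : Function.Surjective fun x : D => x ^ p) :
    Function.Bijective fun x : D => x ^ p := by
  haveI : ExpChar D p := ExpChar.prime Fact.out
  haveI : Module.Finite S D := Module.Finite.of_basis b
  let τ : D ≃ D :=
    b.equivFun.toEquiv.trans ((Equiv.piCongrRight fun _ => Equiv.ofBijective _ hS).trans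
      b.equivFun.symm.toEquiv)
  let L : D →ₗ[S] D := b.constr S fun i => b i ^ p
  have key : ∀ x : D, x ^ p = L (τ x) := by
    intro x
    have h1 : x ^ p = ∑ i, (b.equivFun x i) ^ p • (b i) ^ p := by
      conv_lhs => rw [← b.sum_equivFun x]
      rw [show (∑ i, b.equivFun x i • b i) ^ p = frobenius D p (∑ i, b.equivFun x i • b i)
        from rfl, map_sum]
      exact Finset.sum_congr rfl fun i _ => by rw [frobenius_def, smul_pow]
    have h2 : b.equivFun (τ x) = fun i => (b.equivFun x i) ^ p := by
      show b.equivFun (b.equivFun.symm _) = _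
      rw [LinearEquiv.apply_symm_apply]
      rfl
    rw [h1, Module.Basis.constr_apply_fintype, h2]
  have hLsurj : Function.Surjective L := by
    intro d
    obtain ⟨y, hy⟩ := hsurj d
    exact ⟨τ y, by rw [← key]; exact hy⟩
  have hLinj := OrzechProperty.injective_of_surjective_endomorphism L hLsurj
  have hfun : (fun x : D => x ^ p) = ⇑L ∘ ⇑τ := funext key
  rw [hfun]
  exact ⟨hLinj.comp τ.injective, by rw [← hfun]; exact hsurj⟩

/-- Membership in powers of the extended maximal ideal (times top) of a DVR. -/
private lemma mem_map_pow_smul_top {A : Type*} [CommRing A] [IsLocalRing A]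
    {π : A} (hπ : maximalIdeal A = Ideal.span {π})
    {D : Type*} [CommRing D] [Algebra A D] (m : ℕ) (x : D) :
    x ∈ ((maximalIdeal A).map (algebraMap A D)) ^ m • (⊤ : Submodule D D)
      ↔ ∃ y : D, x = π ^ m • y := by
  have h1 : ((maximalIdeal A).map (algebraMap A D)) ^ m • (⊤ : Submodule D D)
      = Ideal.span {algebraMap A D π ^ m} := by
    rw [smul_eq_mul, Ideal.mul_top, hπ, Ideal.map_span, Set.image_singleton,
      Ideal.span_singleton_pow]
  rw [h1, Ideal.mem_span_singleton']
  constructor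
  · rintro ⟨a, rfl⟩
    exact ⟨a, by rw [Algebra.smul_def, map_pow, mul_comm]⟩
  · rintro ⟨y, rfl⟩
    exact ⟨y, by rw [Algebra.smul_def, map_pow, mul_comm]⟩

/-- Adic completeness transfers along a linear isomorphism with a finite power
of an adically complete ring, provided both ideal filtrations are given by powers
of the same element `π`. -/
private lemma isAdicComplete_of_pi_equiv {A C D : Type*} [CommRing A] [CommRing C] [CommRing D]
    [Algebra A C] [Algebra A D] {ι : Type*} (π : A)
    {I : Ideal C} {J : Ideal D}
    (hI : ∀ (m : ℕ) (x : C), x ∈ I ^ m • (⊤ : Submodule C C) ↔ ∃ y, x = π ^ m • y)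
    (hJ : ∀ (m : ℕ) (x : D), x ∈ J ^ m • (⊤ : Submodule D D) ↔ ∃ y, x = π ^ m • y)
    (Φ : D ≃ₗ[A] (ι → C)) [hc : IsAdicComplete I C] : IsAdicComplete J D := by
  haveI hH : IsHausdorff J D := by
    constructor
    intro x hx
    have h0 : ∀ i, Φ x i = 0 := by
      intro i
      refine hc.toIsHausdorff.haus (Φ x i) fun m => ?_
      obtain ⟨y, hy⟩ := (hJ m x).1 (SModEq.zero.1 (hx m))
      refine SModEq.zero.2 ((hI m _).2 ⟨Φ y i, ?_⟩)
      rw [hy, map_smul]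
      rfl
    have hx0 : Φ x = 0 := funext h0
    exact Φ.map_eq_zero_iff.1 hx0
  haveI hP : IsPrecomplete J D := by
    constructor
    intro f hf
    have hco : ∀ i, ∃ L, ∀ m, Φ (f m) i ≡ L [SMOD I ^ m • (⊤ : Submodule C C)] := by
      intro i
      refine hc.toIsPrecomplete.prec fun {m k} hmk => ?_
      obtain ⟨y, hy⟩ := (hJ m _).1 (SModEq.sub_mem.1 (hf hmk))
      refine SModEq.sub_mem.2 ((hI m _).2 ⟨Φ y i, ?_⟩)
      have : Φ (f m) i - Φ (f k) i = Φ (f m - f k) i := by rw [map_sub]; rfl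
      rw [this, hy, map_smul]
      rfl
    choose L hL using hco
    refine ⟨Φ.symm L, fun m => ?_⟩
    have hc2 : ∀ i, ∃ c, Φ (f m) i - L i = π ^ m • c := fun i =>
      (hI m _).1 (SModEq.sub_mem.1 (hL i m))
    choose c hc' using hc2
    refine SModEq.sub_mem.2 ((hJ m _).2 ⟨Φ.symm c, ?_⟩)
    apply Φ.injective
    rw [map_sub, map_smul, Φ.apply_symm_apply, Φ.apply_symm_apply]
    funext i
    simpa using hc' i
  exact ⟨⟩

namespace St12Aux

variable (A B C : Type*) [CommRing A] [CommRing B] [CommRing C] [Algebra A B] [Algebra A C]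
  (I : Ideal A)

private noncomputable def phi1 : (B ⊗[A] C) →ₐ[A] ((C ⧸ I.map (algebraMap A C)) ⊗[A] B) :=
  Algebra.TensorProduct.lift
    Algebra.TensorProduct.includeRight
    ((Algebra.TensorProduct.includeLeft).comp (Ideal.Quotient.mkₐ A (I.map (algebraMap A C))))
    (fun _ _ => Commute.all _ _)

private lemma phi1_ker : ∀ a ∈ I.map (algebraMap A (B ⊗[A] C)), phi1 A B C I a = 0 := by
  have hker : I.map (algebraMap A (B ⊗[A] C)) ≤ RingHom.ker (phi1 A B C I).toRingHom := by
    rw [Ideal.map_le_iff_le_comap]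
    intro a ha
    rw [Ideal.mem_comap, RingHom.mem_ker]
    show phi1 A B C I (algebraMap A (B ⊗[A] C) a) = 0
    rw [AlgHom.commutes]
    rw [IsScalarTower.algebraMap_apply A (C ⧸ I.map (algebraMap A C))
      ((C ⧸ I.map (algebraMap A C)) ⊗[A] B)]
    have h0 : algebraMap A (C ⧸ I.map (algebraMap A C)) a = 0 := by
      rw [IsScalarTower.algebraMap_apply A C (C ⧸ I.map (algebraMap A C)),
        Ideal.Quotient.algebraMap_eq, Ideal.Quotient.eq_zero_iff_mem]
      exact Ideal.mem_map_of_mem _ ha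
    rw [h0, map_zero]
  exact fun a ha => hker ha

private noncomputable def theta :
    ((B ⊗[A] C) ⧸ I.map (algebraMap A (B ⊗[A] C))) →ₐ[A]
      ((C ⧸ I.map (algebraMap A C)) ⊗[A] B) :=
  Ideal.Quotient.liftₐ _ (phi1 A B C I) (phi1_ker A B C I)

private noncomputable def vmap :
    (C ⧸ I.map (algebraMap A C)) →ₐ[A] ((B ⊗[A] C) ⧸ I.map (algebraMap A (B ⊗[A] C))) := by
  refine Ideal.Quotient.liftₐ _
    ((Ideal.Quotient.mkₐ A _).comp Algebra.TensorProduct.includeRight) ?_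
  have hker : I.map (algebraMap A C) ≤ RingHom.ker
      (((Ideal.Quotient.mkₐ A (I.map (algebraMap A (B ⊗[A] C)))).comp
        (Algebra.TensorProduct.includeRight : C →ₐ[A] B ⊗[A] C)).toRingHom) := by
    rw [Ideal.map_le_iff_le_comap]
    intro a ha
    rw [Ideal.mem_comap, RingHom.mem_ker]
    show Ideal.Quotient.mkₐ A _ (Algebra.TensorProduct.includeRight (algebraMap A C a)) = 0
    rw [AlgHom.commutes, Ideal.Quotient.mkₐ_eq_mk, Ideal.Quotient.eq_zero_iff_mem]
    exact Ideal.mem_map_of_mem _ ha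
  exact fun a ha => RingHom.mem_ker.1 (hker ha)

private noncomputable def psi :
    ((C ⧸ I.map (algebraMap A C)) ⊗[A] B) →ₐ[A]
      ((B ⊗[A] C) ⧸ I.map (algebraMap A (B ⊗[A] C))) :=
  Algebra.TensorProduct.lift (vmap A B C I)
    ((Ideal.Quotient.mkₐ A _).comp Algebra.TensorProduct.includeLeft)
    (fun _ _ => Commute.all _ _)

private lemma theta_mk (x : B ⊗[A] C) :
    theta A B C I (Ideal.Quotient.mk _ x) = phi1 A B C I x := rfl

private lemma vmap_mk (c : C) :
    vmap A B C I (Ideal.Quotient.mk _ c) = Ideal.Quotient.mk _ ((1 : B) ⊗ₜ[A] c) := rfl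

private noncomputable def quotEquiv :
    ((B ⊗[A] C) ⧸ I.map (algebraMap A (B ⊗[A] C))) ≃ₐ[A]
      ((C ⧸ I.map (algebraMap A C)) ⊗[A] B) := by
  refine AlgEquiv.ofAlgHom (theta A B C I) (psi A B C I) ?_ ?_
  · apply Algebra.TensorProduct.ext
    · apply Ideal.Quotient.algHom_ext
      ext c
      simp [theta_mk, vmap_mk, psi, phi1, Ideal.Quotient.mkₐ_eq_mk]
    · ext b
      simp [theta_mk, vmap_mk, psi, phi1, Ideal.Quotient.mkₐ_eq_mk]
  · apply Ideal.Quotient.algHom_ext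
    apply Algebra.TensorProduct.ext
    · ext b
      simp [theta_mk, vmap_mk, psi, phi1, Ideal.Quotient.mkₐ_eq_mk]
    · ext c
      simp [theta_mk, vmap_mk, psi, phi1, Ideal.Quotient.mkₐ_eq_mk]
      rw [← map_mul, Algebra.TensorProduct.tmul_mul_tmul, mul_one, mul_one]

end St12Aux

/-- Let `A` be a complete DVR with residue characteristic `p` and `B` a
finite étale extension of `A` (a finite extension of DVRs of ramification index one with
separable residue extension).  If `C` is an object of `crp(A)` (a flat `A`-algebra,
complete with respect to `𝔭_A C`, with perfect reduction), then the base change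
`B ⊗_A C` is an object of `crp(B)`. -/
theorem statement12 (p : ℕ) [Fact p.Prime]
    (A : Type) [CommRing A] [IsDomain A] [IsDiscreteValuationRing A]
    [IsAdicComplete (maximalIdeal A) A]
    (B : Type) [CommRing B] [IsDomain B] [IsDiscreteValuationRing B]
    [Algebra A B] [Module.Finite A B]
    (hinj : Function.Injective (algebraMap A B))
    [IsLocalHom (algebraMap A B)]
    (he : (maximalIdeal A).map (algebraMap A B) = maximalIdeal B)
    [Algebra.IsSeparable (ResidueField A) (ResidueField B)]
    (C : Type) [CommRing C] [Algebra A C] (hC : IsCrp p A C) :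
    IsCrp p B (B ⊗[A] C) := by
  obtain ⟨hflatC, hcompC, hcharC, hperfC⟩ := hC
  haveI := hflatC
  haveI := hcompC
  haveI := hcharC
  haveI : NoZeroSMulDivisors A B := ⟨fun {c x} h => by
    rw [Algebra.smul_def, mul_eq_zero] at h
    exact h.imp (fun h => hinj (by rw [h, map_zero])) id⟩
  obtain ⟨π, hπ⟩ := (IsPrincipalIdealRing.principal (maximalIdeal A)).principal
  rw [Ideal.submodule_span_eq] at hπ
  have hππ : π ∈ maximalIdeal A := hπ ▸ Ideal.mem_span_singleton_self π
  have hJ : (maximalIdeal B).map (algebraMap B (B ⊗[A] C))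
      = (maximalIdeal A).map (algebraMap A (B ⊗[A] C)) := by
    rw [← he, Ideal.map_map, ← IsScalarTower.algebraMap_eq]
  -- linear equivalence with a finite power of C
  let bA : Module.Basis (Fin (Module.finrank A B)) A B := Module.finBasis A B
  let Φ : (B ⊗[A] C) ≃ₗ[A] (Fin (Module.finrank A B) → C) :=
    (TensorProduct.congr bA.repr (LinearEquiv.refl A C)).trans
      ((TensorProduct.finsuppScalarLeft A C (Fin (Module.finrank A B))).trans
        (Finsupp.linearEquivFunOnFinite A C (Fin (Module.finrank A B))))
  -- nontriviality of the reduction of C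
  haveI hntR : Nontrivial (C ⧸ (maximalIdeal A).map (algebraMap A C)) := by
    by_contra h
    rw [not_nontrivial_iff_subsingleton] at h
    have h1 : ((1 : ℕ) : C ⧸ (maximalIdeal A).map (algebraMap A C)) = 0 :=
      Subsingleton.elim _ _
    exact (Fact.out : p.Prime).ne_one (Nat.dvd_one.1
      ((CharP.cast_eq_zero_iff (C ⧸ (maximalIdeal A).map (algebraMap A C)) p 1).1 h1))
  -- residue characteristic of A is p
  haveI hchark : CharP (ResidueField A) p := by
    let f : ResidueField A →+* (C ⧸ (maximalIdeal A).map (algebraMap A C)) :=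
      Ideal.quotientMap _ (algebraMap A C)
        (fun a ha => Ideal.mem_comap.2 (Ideal.mem_map_of_mem _ ha))
    exact (f.charP_iff_charP p).2 hcharC
  -- primitive element downstairs
  haveI : IsNoetherian A B := inferInstance
  obtain ⟨a0, ha0⟩ := Field.exists_primitive_element (ResidueField A) (ResidueField B)
  have hadjp : IntermediateField.adjoin (ResidueField A) {a0 ^ p} = ⊤ := by
    have h2 := IntermediateField.adjoin_eq_adjoin_pow_expChar_of_isSeparable'
      (ResidueField A) (ResidueField B) {a0} p
    rw [Set.image_singleton] at h2
    rw [← h2]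
    exact ha0
  have hint : IsIntegral (ResidueField A) (a0 ^ p) := IsIntegral.of_finite _ _
  have ha0mem : a0 ∈ Algebra.adjoin (ResidueField A) {a0 ^ p} := by
    rw [← IntermediateField.adjoin_simple_toSubalgebra_of_isAlgebraic hint.isAlgebraic, hadjp,
      IntermediateField.top_toSubalgebra]
    exact Algebra.mem_top
  rw [Algebra.adjoin_singleton_eq_range_aeval, AlgHom.mem_range] at ha0mem
  obtain ⟨G, hG⟩ := ha0mem
  obtain ⟨GA, hGA⟩ := Polynomial.map_surjective (residue A) residue_surjective G
  -- residue compatibility square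
  have hsq : (residue B).comp (algebraMap A B)
      = (algebraMap (ResidueField A) (ResidueField B)).comp (residue A) := by
    ext a
    show residue B (algebraMap A B a) = algebraMap (ResidueField A) (ResidueField B) (residue A a)
    rw [show algebraMap (ResidueField A) (ResidueField B)
        = ResidueField.map (algebraMap A B) from rfl, ResidueField.map_residue]
  have hres : ∀ (x : B) (Q : Polynomial A),
      residue B (Polynomial.aeval x Q)
        = Polynomial.aeval (residue B x) (Q.map (residue A)) := by
    intro x Q
    rw [Polynomial.aeval_def, Polynomial.aeval_def, Polynomial.eval₂_map,
      Polynomial.hom_eval₂, hsq]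
  -- a monogenic generator of B over A via Nakayama
  obtain ⟨α, hα⟩ := residue_surjective (R := B) a0
  have hmB : maximalIdeal B = Ideal.span {algebraMap A B π} := by
    rw [← he, hπ, Ideal.map_span, Set.image_singleton]
  have hadj : Algebra.adjoin A {α} = ⊤ := by
    rw [← Algebra.toSubmodule_eq_top, ← top_le_iff]
    refine Submodule.le_of_le_smul_of_le_jacobson_bot Module.Finite.fg_top
      (IsLocalRing.jacobson_eq_maximalIdeal (⊥ : Ideal A) bot_ne_top).ge ?_
    intro b _
    have hbmem : residue B b ∈ Algebra.adjoin (ResidueField A) {a0} := by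
      rw [← IntermediateField.adjoin_simple_toSubalgebra_of_isAlgebraic
        (IsIntegral.of_finite _ _).isAlgebraic, ha0, IntermediateField.top_toSubalgebra]
      exact Algebra.mem_top
    rw [Algebra.adjoin_singleton_eq_range_aeval, AlgHom.mem_range] at hbmem
    obtain ⟨P, hP⟩ := hbmem
    obtain ⟨PA, hPA⟩ := Polynomial.map_surjective (residue A) residue_surjective P
    have hb' : Polynomial.aeval α PA ∈ Subalgebra.toSubmodule (Algebra.adjoin A {α}) := by
      show Polynomial.aeval α PA ∈ Algebra.adjoin A {α}
      rw [Algebra.adjoin_singleton_eq_range_aeval]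
      exact ⟨PA, rfl⟩
    have hdiff : b - Polynomial.aeval α PA ∈ maximalIdeal B := by
      have h0 : residue B (b - Polynomial.aeval α PA) = 0 := by
        rw [map_sub, hres, hα, hPA, hP, sub_self]
      rwa [residue_eq_zero_iff] at h0
    rw [hmB, Ideal.mem_span_singleton'] at hdiff
    obtain ⟨z, hz⟩ := hdiff
    refine Submodule.mem_sup.2 ⟨Polynomial.aeval α PA, hb',
      b - Polynomial.aeval α PA, ?_, by ring⟩
    rw [← hz, show z * algebraMap A B π = π • z from by rw [Algebra.smul_def]; ring]
    exact Submodule.smul_mem_smul hππ Submodule.mem_top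
  -- the key approximation for the generator
  have hα2 : α - Polynomial.aeval (α ^ p) GA ∈ maximalIdeal B := by
    have h0 : residue B (α - Polynomial.aeval (α ^ p) GA) = 0 := by
      rw [map_sub, hres, map_pow, hα, hGA, hG, sub_self]
    rwa [residue_eq_zero_iff] at h0
  -- the base-changed algebra D over the reduction of C
  let bD : Module.Basis (Fin (Module.finrank A B)) (C ⧸ (maximalIdeal A).map (algebraMap A C))
      ((C ⧸ (maximalIdeal A).map (algebraMap A C)) ⊗[A] B) :=
    bA.baseChange _
  haveI hntD : Nontrivial ((C ⧸ (maximalIdeal A).map (algebraMap A C)) ⊗[A] B) := by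
    have hn : 0 < Module.finrank A B := Module.finrank_pos
    exact nontrivial_of_ne (bD ⟨0, hn⟩) 0 (bD.ne_zero _)
  have hpD : ((p : ℕ) : (C ⧸ (maximalIdeal A).map (algebraMap A C)) ⊗[A] B) = 0 := by
    rw [show ((p : ℕ) : (C ⧸ (maximalIdeal A).map (algebraMap A C)) ⊗[A] B)
        = algebraMap (C ⧸ (maximalIdeal A).map (algebraMap A C)) _
          ((p : ℕ) : C ⧸ (maximalIdeal A).map (algebraMap A C)) from (map_natCast _ p).symm,
      CharP.cast_eq_zero, map_zero]
  haveI hcharD : CharP ((C ⧸ (maximalIdeal A).map (algebraMap A C)) ⊗[A] B) p :=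
    (CharP.charP_iff_prime_eq_zero Fact.out).2 hpD
  haveI : ExpChar ((C ⧸ (maximalIdeal A).map (algebraMap A C)) ⊗[A] B) p :=
    ExpChar.prime Fact.out
  have hmap0 : algebraMap A ((C ⧸ (maximalIdeal A).map (algebraMap A C)) ⊗[A] B) π = 0 := by
    have h0 : algebraMap A (C ⧸ (maximalIdeal A).map (algebraMap A C)) π = 0 := by
      rw [IsScalarTower.algebraMap_apply A C (C ⧸ (maximalIdeal A).map (algebraMap A C)),
        Ideal.Quotient.algebraMap_eq, Ideal.Quotient.eq_zero_iff_mem]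
      exact Ideal.mem_map_of_mem _ hππ
    rw [IsScalarTower.algebraMap_apply A (C ⧸ (maximalIdeal A).map (algebraMap A C))
      ((C ⧸ (maximalIdeal A).map (algebraMap A C)) ⊗[A] B), h0, map_zero]
  -- Frobenius is surjective on D
  have hsurjD : Function.Surjective
      (fun x : (C ⧸ (maximalIdeal A).map (algebraMap A C)) ⊗[A] B => x ^ p) := by
    let T : Subalgebra A ((C ⧸ (maximalIdeal A).map (algebraMap A C)) ⊗[A] B) :=
      { (frobenius ((C ⧸ (maximalIdeal A).map (algebraMap A C)) ⊗[A] B) p).range.toSubsemiring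
        with
        algebraMap_mem' := fun a => by
          obtain ⟨s, hs⟩ := hperfC.2 (algebraMap A (C ⧸ (maximalIdeal A).map (algebraMap A C)) a)
          refine ⟨algebraMap (C ⧸ (maximalIdeal A).map (algebraMap A C)) _ s, ?_⟩
          rw [frobenius_def, ← map_pow, show s ^ p
            = algebraMap A (C ⧸ (maximalIdeal A).map (algebraMap A C)) a from hs,
            ← IsScalarTower.algebraMap_apply] }
    have halgR : ∀ r : C ⧸ (maximalIdeal A).map (algebraMap A C),
        algebraMap (C ⧸ (maximalIdeal A).map (algebraMap A C))
          ((C ⧸ (maximalIdeal A).map (algebraMap A C)) ⊗[A] B) r ∈ T := by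
      intro r
      obtain ⟨s, hs⟩ := hperfC.2 r
      exact ⟨algebraMap _ _ s, by rw [frobenius_def, ← map_pow, show s ^ p = r from hs]⟩
    have hone : ((1 : C ⧸ (maximalIdeal A).map (algebraMap A C)) ⊗ₜ[A] α :
        (C ⧸ (maximalIdeal A).map (algebraMap A C)) ⊗[A] B) ∈ T := by
      rw [hmB, Ideal.mem_span_singleton'] at hα2
      obtain ⟨z, hz⟩ := hα2
      have hexp : ((1 : C ⧸ (maximalIdeal A).map (algebraMap A C)) ⊗ₜ[A] α :
          (C ⧸ (maximalIdeal A).map (algebraMap A C)) ⊗[A] B)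
          = Polynomial.aeval
            (((1 : C ⧸ (maximalIdeal A).map (algebraMap A C)) ⊗ₜ[A] α :
              (C ⧸ (maximalIdeal A).map (algebraMap A C)) ⊗[A] B) ^ p) GA := by
        have h1 : α = Polynomial.aeval (α ^ p) GA + z * algebraMap A B π := by
          rw [hz]; ring
        have htop : ((1 : C ⧸ (maximalIdeal A).map (algebraMap A C)) ⊗ₜ[A] α :
            (C ⧸ (maximalIdeal A).map (algebraMap A C)) ⊗[A] B)
            = (1 : C ⧸ (maximalIdeal A).map (algebraMap A C)) ⊗ₜ[A]
              (Polynomial.aeval (α ^ p) GA) := by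
          conv_lhs => rw [h1]
          have hsm : (π • (1 : C ⧸ (maximalIdeal A).map (algebraMap A C))
              : C ⧸ (maximalIdeal A).map (algebraMap A C)) = 0 := by
            rw [Algebra.smul_def, mul_one,
              IsScalarTower.algebraMap_apply A C (C ⧸ (maximalIdeal A).map (algebraMap A C)),
              Ideal.Quotient.algebraMap_eq, Ideal.Quotient.eq_zero_iff_mem]
            exact Ideal.mem_map_of_mem _ hππ
          rw [TensorProduct.tmul_add,
            show (z * algebraMap A B π : B) = π • z from by rw [Algebra.smul_def]; ring,
            TensorProduct.tmul_smul, TensorProduct.smul_tmul', hsm,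
            TensorProduct.zero_tmul, add_zero]
        conv_lhs => rw [htop]
        rw [show ((1 : C ⧸ (maximalIdeal A).map (algebraMap A C)) ⊗ₜ[A]
              (Polynomial.aeval (α ^ p) GA) :
              (C ⧸ (maximalIdeal A).map (algebraMap A C)) ⊗[A] B)
            = (Algebra.TensorProduct.includeRight :
                B →ₐ[A] (C ⧸ (maximalIdeal A).map (algebraMap A C)) ⊗[A] B)
                (Polynomial.aeval (α ^ p) GA) from rfl,
          ← Polynomial.aeval_algHom_apply, map_pow]
        rfl
      rw [hexp]
      have ht : (((1 : C ⧸ (maximalIdeal A).map (algebraMap A C)) ⊗ₜ[A] α :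
          (C ⧸ (maximalIdeal A).map (algebraMap A C)) ⊗[A] B) ^ p) ∈ T :=
        ⟨(1 : C ⧸ (maximalIdeal A).map (algebraMap A C)) ⊗ₜ[A] α, by rw [frobenius_def]⟩
      have hmem : Polynomial.aeval
          (((1 : C ⧸ (maximalIdeal A).map (algebraMap A C)) ⊗ₜ[A] α :
            (C ⧸ (maximalIdeal A).map (algebraMap A C)) ⊗[A] B) ^ p) GA
          ∈ Algebra.adjoin A
            {(((1 : C ⧸ (maximalIdeal A).map (algebraMap A C)) ⊗ₜ[A] α :
              (C ⧸ (maximalIdeal A).map (algebraMap A C)) ⊗[A] B) ^ p)} := by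
        rw [Algebra.adjoin_singleton_eq_range_aeval]
        exact ⟨GA, rfl⟩
      exact Algebra.adjoin_le (Set.singleton_subset_iff.2 ht) hmem
    have hmemT : ∀ x : (C ⧸ (maximalIdeal A).map (algebraMap A C)) ⊗[A] B, x ∈ T := by
      intro x
      induction x using TensorProduct.induction_on with
      | zero => exact zero_mem T
      | add u v hu hv => exact add_mem hu hv
      | tmul r b =>
        have h1 : (r ⊗ₜ[A] b : (C ⧸ (maximalIdeal A).map (algebraMap A C)) ⊗[A] B)
            = algebraMap (C ⧸ (maximalIdeal A).map (algebraMap A C)) _ r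
              * ((1 : C ⧸ (maximalIdeal A).map (algebraMap A C)) ⊗ₜ[A] b) := by
          rw [Algebra.TensorProduct.algebraMap_apply, Algebra.TensorProduct.tmul_mul_tmul,
            mul_one, one_mul]
          simp
        rw [h1]
        refine mul_mem (halgR r) ?_
        have hb : b ∈ Algebra.adjoin A {α} := by rw [hadj]; trivial
        clear h1
        induction hb using Algebra.adjoin_induction with
        | mem y hy =>
          rw [Set.mem_singleton_iff] at hy
          rw [hy]
          exact hone
        | algebraMap r' =>
          rw [show ((1 : C ⧸ (maximalIdeal A).map (algebraMap A C)) ⊗ₜ[A] (algebraMap A B r') :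
              (C ⧸ (maximalIdeal A).map (algebraMap A C)) ⊗[A] B)
            = algebraMap A _ r' from
            (Algebra.TensorProduct.includeRight.commutes r' : _)]
          exact T.algebraMap_mem r'
        | add y z hy hz hy' hz' =>
          rw [TensorProduct.tmul_add]
          exact add_mem hy' hz'
        | mul y z hy hz hy' hz' =>
          rw [show ((1 : C ⧸ (maximalIdeal A).map (algebraMap A C)) ⊗ₜ[A] (y * z) :
              (C ⧸ (maximalIdeal A).map (algebraMap A C)) ⊗[A] B)
            = ((1 : C ⧸ (maximalIdeal A).map (algebraMap A C)) ⊗ₜ[A] y)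
              * ((1 : C ⧸ (maximalIdeal A).map (algebraMap A C)) ⊗ₜ[A] z) from by
            rw [Algebra.TensorProduct.tmul_mul_tmul, one_mul]]
          exact mul_mem hy' hz'
    intro d
    obtain ⟨y, hy⟩ := hmemT d
    exact ⟨y, by show y ^ p = d; rw [← frobenius_def]; exact hy⟩
  -- Frobenius is bijective on D
  have hbijD : Function.Bijective
      (fun x : (C ⧸ (maximalIdeal A).map (algebraMap A C)) ⊗[A] B => x ^ p) :=
    frobenius_bij_of_basis bD hperfC hsurjD
  -- assemble the four conditions
  refine ⟨Module.Flat.baseChange A B C, ?_, ?_, ?_⟩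
  · rw [hJ]
    exact isAdicComplete_of_pi_equiv π (fun m x => mem_map_pow_smul_top hπ m x)
      (fun m x => mem_map_pow_smul_top hπ m x) Φ
  · rw [hJ]
    exact charP_of_injective_ringHom
      (f := (St12Aux.quotEquiv A B C (maximalIdeal A)).symm.toRingEquiv.toRingHom)
      (St12Aux.quotEquiv A B C (maximalIdeal A)).symm.toRingEquiv.injective p
  · rw [hJ]
    exact bij_pow_transfer (St12Aux.quotEquiv A B C (maximalIdeal A)).toRingEquiv p hbijD
end

section
/- Let A be a complete discrete valuation ring with residue characteristic p, Λ a field of characteristic ≠ p, and ρ: G → Aut(V) a representation of the Galois group G of a finite generically Galois, monogenic extension B/A on a finite-dimensional Λ-vector space V. Define G_i = ker(G → Aut(B/m_B^{i+1})) and ar_B(ρ) = e_{B/A}^{-1} Σ_{i≥0} |G_i|·codim V^{G_i}. If B ⊗_A A^g is a discrete valuation ring with ramification index e over B, then G_i = G'_{ei} = ⋯ = G'_{ei+e-1} for all i ≥ 0, where G'_j are the ramification groups of (B ⊗_A A^g)/A^g, and consequently ar_B(ρ) = ar_{B⊗_A A^g}(ρ|_{A^g}). -/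
open IsLocalRing

/-- `Au` is a universal residual perfection of `A`: an initial object of `crp(A)`. -/
def IsUniversalRP (p : ℕ) (A : Type) [CommRing A] [IsDomain A] [IsDiscreteValuationRing A]
    (Au : Type) [CommRing Au] [Algebra A Au] : Prop :=
  IsCrp p A Au ∧
  ∀ (B : Type) (_ : CommRing B) (_ : Algebra A B), IsCrp p A B →
    ∃! _f : Au →ₐ[A] B, True

/-- `Ag` is a generic residual perfection of `A`: an object of `crp(A)` whose reduction is
a field, namely the fraction field of the reduction of a universal residual perfection
`Au` of `A` (via the canonical map `Au → Ag`). -/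
def IsGenericRP (p : ℕ) (A : Type) [CommRing A] [IsDomain A] [IsDiscreteValuationRing A]
    (Ag : Type) [CommRing Ag] [Algebra A Ag] : Prop :=
  IsCrp p A Ag ∧
  IsField (Ag ⧸ (maximalIdeal A).map (algebraMap A Ag)) ∧
  ∃ (Au : Type) (_ : CommRing Au) (_ : Algebra A Au),
    IsUniversalRP p A Au ∧
    ∃ f : Au →ₐ[A] Ag,
      (∀ a : Au, f a ∈ (maximalIdeal A).map (algebraMap A Ag) →
        a ∈ (maximalIdeal A).map (algebraMap A Au)) ∧
      (∀ y : Ag, ∃ a b : Au,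
        f b ∉ (maximalIdeal A).map (algebraMap A Ag) ∧
        y * f b - f a ∈ (maximalIdeal A).map (algebraMap A Ag))


open scoped TensorProduct

/-- `σ` lies in the `i`-th ramification group (lower numbering) of the local `R`-algebra
`B`:  `σ` acts trivially on `B ⧸ 𝔪_B ^ (i + 1)`. -/
def InRam (R B : Type) [CommRing R] [CommRing B] [IsLocalRing B] [Algebra R B]
    (i : ℕ) (σ : B ≃ₐ[R] B) : Prop :=
  ∀ x : B, σ x - x ∈ (maximalIdeal B) ^ (i + 1)

/-- The subspace of vectors fixed by all group elements satisfying a predicate `P`. -/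
def fixedSub (Λ V G : Type) [Field Λ] [AddCommGroup V] [Module Λ V] [Group G]
    (ρ : G →* (V ≃ₗ[Λ] V)) (P : G → Prop) : Submodule Λ V where
  carrier := {v | ∀ σ : G, P σ → ρ σ v = v}
  add_mem' := by
    intro a b ha hb σ h
    rw [map_add, ha σ h, hb σ h]
  zero_mem' := by
    intro σ h
    exact map_zero _
  smul_mem' := by
    intro c v hv σ h
    rw [map_smul, hv σ h]

/-- The codimension of the subspace of vectors fixed by all elements satisfying `P`. -/
noncomputable def codimFixed (Λ V G : Type) [Field Λ] [AddCommGroup V] [Module Λ V]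
    [Group G] (ρ : G →* (V ≃ₗ[Λ] V)) (P : G → Prop) : ℕ :=
  Module.finrank Λ V - Module.finrank Λ (fixedSub Λ V G ρ P)

/-- The naive Artin conductor `ar_B(ρ) = e⁻¹ Σ_{i ≥ 0} |G_i| · codim V^{G_i}`, where the
ramification groups are computed via a (bijective) identification `θ` of the abstract
group `G` with the automorphism group of the local `R`-algebra `B`, and `e` is the
ramification index of `B` over the base. -/
noncomputable def naiveArtin (Λ V G : Type) [Field Λ] [AddCommGroup V] [Module Λ V]
    [Group G] (ρ : G →* (V ≃ₗ[Λ] V))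
    (R B : Type) [CommRing R] [CommRing B] [IsLocalRing B] [Algebra R B]
    (θ : G → (B ≃ₐ[R] B)) (e : ℕ) : ℝ :=
  (e : ℝ)⁻¹ * ∑' i : ℕ,
    (Nat.card {σ : G // InRam R B i (θ σ)} : ℝ) *
      (codimFixed Λ V G ρ (fun σ => InRam R B i (θ σ)) : ℝ)

lemma memMaxPow {R : Type} [CommRing R] [IsDomain R] [IsDiscreteValuationRing R]
    {ϖ : R} (hϖ : Irreducible ϖ) (n : ℕ) (x : R) :
    x ∈ maximalIdeal R ^ n ↔ ϖ ^ n ∣ x := by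
  rw [hϖ.maximalIdeal_eq, Ideal.span_singleton_pow, Ideal.mem_span_singleton]

lemma maxPow_inj {R : Type} [CommRing R] [IsDomain R] [IsDiscreteValuationRing R]
    {a b : ℕ} (h : maximalIdeal R ^ a = maximalIdeal R ^ b) : a = b := by
  obtain ⟨ϖ, hϖ⟩ := IsDiscreteValuationRing.exists_irreducible R
  have key : ∀ m n : ℕ, (maximalIdeal R) ^ m = (maximalIdeal R) ^ n → n ≤ m := by
    intro m n hmn
    have h1 : ϖ ^ m ∈ maximalIdeal R ^ m := Ideal.pow_mem_pow (by
      rw [mem_maximalIdeal]; exact hϖ.not_isUnit) m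
    rw [hmn, memMaxPow hϖ] at h1
    exact (pow_dvd_pow_iff hϖ.ne_zero hϖ.not_isUnit).mp h1
  exact le_antisymm (key b a h.symm) (key a b h)

lemma backVal {A : Type} [CommRing A] [IsDomain A] [IsDiscreteValuationRing A]
    {Ag : Type} [CommRing Ag] [Algebra A Ag]
    {B : Type} [CommRing B] [IsDomain B] [IsDiscreteValuationRing B] [Algebra A B]
    [IsDomain (Ag ⊗[A] B)] [IsDiscreteValuationRing (Ag ⊗[A] B)]
    {e : ℕ}
    (heB : (maximalIdeal B).map
        ((Algebra.TensorProduct.includeRight : B →ₐ[A] Ag ⊗[A] B).toRingHom) =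
      (maximalIdeal (Ag ⊗[A] B)) ^ e)
    {i : ℕ} {x : B}
    (hx : (Algebra.TensorProduct.includeRight : B →ₐ[A] Ag ⊗[A] B) x ∈
      (maximalIdeal (Ag ⊗[A] B)) ^ (e * i + 1)) :
    x ∈ (maximalIdeal B) ^ (i + 1) := by
  obtain ⟨ϖB, hϖB⟩ := IsDiscreteValuationRing.exists_irreducible B
  obtain ⟨ϖD, hϖD⟩ := IsDiscreteValuationRing.exists_irreducible (Ag ⊗[A] B)
  set ι : B →ₐ[A] Ag ⊗[A] B := Algebra.TensorProduct.includeRight with hι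
  have hspan : Ideal.span {ι ϖB} = (maximalIdeal (Ag ⊗[A] B)) ^ e := by
    rw [← heB, hϖB.maximalIdeal_eq, Ideal.map_span]
    simp
  have hassoc : Associated (ι ϖB) (ϖD ^ e) := by
    rw [← Ideal.span_singleton_eq_span_singleton, hspan, hϖD.maximalIdeal_eq,
      Ideal.span_singleton_pow]
  rcases eq_or_ne x 0 with rfl | hx0
  · exact Submodule.zero_mem _
  obtain ⟨n, hn⟩ := IsDiscreteValuationRing.associated_pow_irreducible hx0 hϖB
  by_cases hni : i + 1 ≤ n
  · rw [memMaxPow hϖB]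
    exact dvd_trans (pow_dvd_pow ϖB hni) hn.symm.dvd
  · exfalso
    push_neg at hni
    have h1 : Associated (ι x) (ϖD ^ (e * n)) := by
      have h0 : Associated ((ι ϖB) ^ n) ((ϖD ^ e) ^ n) := hassoc.pow_pow
      have h0' : Associated ((ι ϖB) ^ n) (ϖD ^ (e * n)) := by
        rwa [← pow_mul] at h0
      have h5 : Associated (ι x) (ι (ϖB ^ n)) := hn.map ι.toRingHom.toMonoidHom
      rw [map_pow] at h5
      exact h5.trans h0'
    rw [memMaxPow hϖD] at hx
    have h2 : ϖD ^ (e * i + 1) ∣ ϖD ^ (e * n) := h1.dvd_iff_dvd_right.mp hx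
    have h3 := (pow_dvd_pow_iff hϖD.ne_zero hϖD.not_isUnit).mp h2
    have h4 : e * n ≤ e * i := Nat.mul_le_mul_left e (Nat.lt_succ_iff.mp hni)
    omega

lemma ramIff {A : Type} [CommRing A] [IsDomain A] [IsDiscreteValuationRing A]
    {Ag : Type} [CommRing Ag] [Algebra A Ag]
    {B : Type} [CommRing B] [IsDomain B] [IsDiscreteValuationRing B] [Algebra A B]
    [IsDomain (Ag ⊗[A] B)] [IsDiscreteValuationRing (Ag ⊗[A] B)]
    {e : ℕ}
    (heB : (maximalIdeal B).map
        ((Algebra.TensorProduct.includeRight : B →ₐ[A] Ag ⊗[A] B).toRingHom) =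
      (maximalIdeal (Ag ⊗[A] B)) ^ e)
    (σ : B ≃ₐ[A] B) (i r : ℕ) (hr : r < e) :
    InRam A B i σ ↔
      InRam Ag (Ag ⊗[A] B) (e * i + r)
        (Algebra.TensorProduct.congr (AlgEquiv.refl (A₁ := Ag)) σ) := by
  set ι : B →ₐ[A] Ag ⊗[A] B := Algebra.TensorProduct.includeRight with hι
  set τ : (Ag ⊗[A] B) ≃ₐ[Ag] (Ag ⊗[A] B) := Algebra.TensorProduct.congr (AlgEquiv.refl (A₁ := Ag)) σ with hτ
  have htmul : ∀ (a : Ag) (b : B), τ (a ⊗ₜ[A] b) = a ⊗ₜ[A] (σ b) := by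
    intro a b
    simp [hτ, Algebra.TensorProduct.congr_apply, Algebra.TensorProduct.map_tmul]
  constructor
  · intro h y
    have key : ∀ y : Ag ⊗[A] B, τ y - y ∈ ((maximalIdeal B) ^ (i + 1)).map ι.toRingHom := by
      intro y
      induction y using TensorProduct.induction_on with
      | zero => simpa using Ideal.zero_mem _
      | tmul a b =>
        have : τ (a ⊗ₜ[A] b) - a ⊗ₜ[A] b = (a ⊗ₜ[A] (1 : B)) * ι (σ b - b) := by
          rw [htmul]
          simp only [hι, Algebra.TensorProduct.includeRight_apply, map_sub,
            mul_sub, Algebra.TensorProduct.tmul_mul_tmul, mul_one, one_mul]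
        rw [this]
        exact Ideal.mul_mem_left _ _ (Ideal.mem_map_of_mem _ (h b))
      | add u v hu hv =>
        have : τ (u + v) - (u + v) = (τ u - u) + (τ v - v) := by
          rw [map_add]; ring
        rw [this]
        exact Ideal.add_mem _ hu hv
    have hle : ((maximalIdeal B) ^ (i + 1)).map ι.toRingHom ≤
        (maximalIdeal (Ag ⊗[A] B)) ^ (e * i + r + 1) := by
      rw [Ideal.map_pow, heB, ← pow_mul]
      exact Ideal.pow_le_pow_right (by nlinarith)
    exact hle (key y)
  · intro h x
    have h1 := h (ι x)
    have h2 : τ (ι x) - ι x = ι (σ x - x) := by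
      simp [hι, Algebra.TensorProduct.includeRight_apply, htmul, TensorProduct.tmul_sub]
    rw [h2] at h1
    refine backVal heB ?_
    refine Ideal.pow_le_pow_right (by omega) h1

lemma finiteAut {A B : Type} [CommRing A] [CommRing B] [IsDomain B] [Algebra A B]
    [Module.Finite A B] (hinj : Function.Injective (algebraMap A B))
    (hmono : ∃ x : B, Algebra.adjoin A {x} = ⊤) : Finite (B ≃ₐ[A] B) := by
  obtain ⟨x, hx⟩ := hmono
  have hint : IsIntegral A x := IsIntegral.of_finite A x
  set P : Polynomial B := (minpoly A x).map (algebraMap A B) with hP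
  have hP0 : P ≠ 0 := (Polynomial.Monic.map _ (minpoly.monic hint)).ne_zero
  have hroots : Set.Finite {y : B | Polynomial.IsRoot P y} :=
    Polynomial.finite_setOf_isRoot hP0
  have : Finite {y : B | Polynomial.IsRoot P y} := hroots
  refine Finite.of_injective
    (fun σ : B ≃ₐ[A] B => (⟨σ x, ?_⟩ : {y : B | Polynomial.IsRoot P y})) ?_
  · show Polynomial.IsRoot P (σ x)
    have : Polynomial.aeval (σ x) (minpoly A x) = 0 := by
      rw [Polynomial.aeval_algEquiv]
      simp [minpoly.aeval]
    rw [Polynomial.IsRoot, hP, Polynomial.eval_map, ← Polynomial.aeval_def]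
    exact this
  · intro σ τ h
    simp only [Subtype.mk.injEq] at h
    have : σ.toAlgHom = τ.toAlgHom :=
      AlgHom.ext_of_adjoin_eq_top hx (by rintro y rfl; exact h)
    exact AlgEquiv.ext fun b => AlgHom.congr_fun this b

lemma existsBound {A B : Type} [CommRing A] [CommRing B] [IsDomain B]
    [IsDiscreteValuationRing B] [Algebra A B] (hfin : Finite (B ≃ₐ[A] B)) :
    ∃ N : ℕ, ∀ (σ : B ≃ₐ[A] B) (i : ℕ), N ≤ i → InRam A B i σ → σ = 1 := by
  classical
  obtain ⟨ϖ, hϖ⟩ := IsDiscreteValuationRing.exists_irreducible B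
  have hb : ∀ σ : B ≃ₐ[A] B, ∃ k : ℕ, σ ≠ 1 → ∀ i, k ≤ i → ¬ InRam A B i σ := by
    intro σ
    by_cases hσ : σ = 1
    · exact ⟨0, fun h => absurd hσ h⟩
    · have hx : ∃ x : B, σ x ≠ x := by
        by_contra hc
        push_neg at hc
        exact hσ (AlgEquiv.ext hc)
      obtain ⟨x, hx⟩ := hx
      have hd : σ x - x ≠ 0 := sub_ne_zero.mpr hx
      obtain ⟨k, hk⟩ := IsDiscreteValuationRing.associated_pow_irreducible hd hϖ
      refine ⟨k, fun _ i hi hram => ?_⟩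
      have h1 := hram x
      rw [memMaxPow hϖ] at h1
      have h2 : ϖ ^ (i + 1) ∣ ϖ ^ k := hk.dvd_iff_dvd_right.mp h1
      have h3 := (pow_dvd_pow_iff hϖ.ne_zero hϖ.not_isUnit).mp h2
      omega
  choose n hn using hb
  have : Fintype (B ≃ₐ[A] B) := Fintype.ofFinite _
  refine ⟨Finset.univ.sup n, fun σ i hi hram => ?_⟩
  by_contra hσ
  exact hn σ hσ i (le_trans (Finset.le_sup (Finset.mem_univ σ)) hi) hram

lemma sumDivBlock (F : ℕ → ℝ) (e : ℕ) (he : 0 < e) (N : ℕ) :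
    ∑ j ∈ Finset.range (e * N), F (j / e) = e * ∑ i ∈ Finset.range N, F i := by
  induction N with
  | zero => simp
  | succ n ih =>
    have hconst : ∀ j ∈ Finset.Ico (e * n) (e * n + e), F (j / e) = F n := by
      intro j hj
      rw [Finset.mem_Ico] at hj
      congr 1
      exact Nat.div_eq_of_lt_le (by rw [Nat.mul_comm]; exact hj.1)
        (by rw [Nat.succ_mul, Nat.mul_comm n e]; omega)
    have step : ∑ j ∈ Finset.range (e * n + e), F (j / e) =
        (∑ j ∈ Finset.range (e * n), F (j / e)) + e * F n := by
      simp only [Finset.range_eq_Ico]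
      rw [← Finset.sum_Ico_consecutive _ (Nat.zero_le (e * n)) (Nat.le_add_right (e * n) e),
        Finset.sum_congr rfl hconst, Finset.sum_const, Nat.card_Ico]
      simp [nsmul_eq_mul]
    rw [Nat.mul_succ, step, ih, Finset.sum_range_succ]
    push_cast
    ring


/-- Let `A` be a complete DVR with residue characteristic `p`, `Λ` a field
of characteristic `≠ p`, `B/A` a finite generically Galois monogenic extension with
Galois group `G = (B ≃ₐ[A] B)`, and `ρ` a representation of `G` on a finite-dimensional
`Λ`-vector space `V`.  Suppose `D = Ag ⊗_A B` is a DVR, with ramification index `e`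
over `B`.  Then `G_i = G'_{e i} = ⋯ = G'_{e i + e - 1}` for all `i ≥ 0`, where `G'_j`
are the ramification groups of `D/Ag` (via the base-change identification `σ ↦ 1 ⊗ σ`),
and consequently the naive Artin conductors agree: `ar_B(ρ) = ar_D(ρ|_{Ag})`. -/
theorem statement16 (p : ℕ) [Fact p.Prime]
    (A : Type) [CommRing A] [IsDomain A] [IsDiscreteValuationRing A]
    [IsAdicComplete (maximalIdeal A) A]
    (Λ : Type) [Field Λ] (hchar : ringChar Λ ≠ p)
    (V : Type) [AddCommGroup V] [Module Λ V] [FiniteDimensional Λ V]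
    (Ag : Type) [CommRing Ag] [IsDomain Ag] [IsDiscreteValuationRing Ag] [Algebra A Ag]
    (hAg : IsGenericRP p A Ag)
    (B : Type) [CommRing B] [IsDomain B] [IsDiscreteValuationRing B]
    [Algebra A B] [Module.Finite A B] [IsLocalHom (algebraMap A B)]
    (hinj : Function.Injective (algebraMap A B))
    (K : Type) [Field K] [Algebra A K] [IsFractionRing A K]
    (L : Type) [Field L] [Algebra B L] [IsFractionRing B L]
    [Algebra A L] [IsScalarTower A B L]
    [Algebra K L] [IsScalarTower A K L] [IsGalois K L]
    (hmono : ∃ x : B, Algebra.adjoin A {x} = ⊤)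
    (hGal : Nat.card (B ≃ₐ[A] B) = Module.finrank K L)
    (ρ : (B ≃ₐ[A] B) →* (V ≃ₗ[Λ] V))
    [IsDomain (Ag ⊗[A] B)] [IsDiscreteValuationRing (Ag ⊗[A] B)]
    (eBA : ℕ)
    (heBA : (maximalIdeal A).map (algebraMap A B) = (maximalIdeal B) ^ eBA)
    (e : ℕ) (he : 1 ≤ e)
    (heB : (maximalIdeal B).map
        ((Algebra.TensorProduct.includeRight : B →ₐ[A] Ag ⊗[A] B).toRingHom) =
      (maximalIdeal (Ag ⊗[A] B)) ^ e)
    (eDA : ℕ)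
    (heDA : (maximalIdeal Ag).map (algebraMap Ag (Ag ⊗[A] B)) =
      (maximalIdeal (Ag ⊗[A] B)) ^ eDA) :
    (∀ (σ : B ≃ₐ[A] B) (i r : ℕ), r < e →
      (InRam A B i σ ↔
        InRam Ag (Ag ⊗[A] B) (e * i + r)
          (Algebra.TensorProduct.congr (AlgEquiv.refl (A₁ := Ag)) σ))) ∧
    naiveArtin Λ V (B ≃ₐ[A] B) ρ A B id eBA =
      naiveArtin Λ V (B ≃ₐ[A] B) ρ Ag (Ag ⊗[A] B)
        (fun σ => Algebra.TensorProduct.congr (AlgEquiv.refl (A₁ := Ag)) σ) eDA := by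
  classical
  have he0 : 0 < e := he
  have part1 : ∀ (σ : B ≃ₐ[A] B) (i r : ℕ), r < e →
      (InRam A B i σ ↔
        InRam Ag (Ag ⊗[A] B) (e * i + r)
          (Algebra.TensorProduct.congr (AlgEquiv.refl (A₁ := Ag)) σ)) :=
    fun σ i r hr => ramIff heB σ i r hr
  refine ⟨part1, ?_⟩
  have hfin : Finite (B ≃ₐ[A] B) := finiteAut hinj hmono
  obtain ⟨N, hN⟩ := existsBound hfin
  set F : ℕ → ℝ := fun i =>
    (Nat.card {σ : B ≃ₐ[A] B // InRam A B i σ} : ℝ) *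
      (codimFixed Λ V (B ≃ₐ[A] B) ρ (fun σ => InRam A B i σ) : ℝ) with hF
  have hvan : ∀ i, N ≤ i → F i = 0 := by
    intro i hi
    have hfix : fixedSub Λ V (B ≃ₐ[A] B) ρ (fun σ => InRam A B i σ) = ⊤ := by
      rw [eq_top_iff]
      intro v _ σ hσ
      rw [hN σ i hi hσ, map_one]
      rfl
    have hc : codimFixed Λ V (B ≃ₐ[A] B) ρ (fun σ => InRam A B i σ) = 0 := by
      unfold codimFixed
      rw [hfix]
      rw [finrank_top]
      omega
    simp [hF, hc]
  have hpred : ∀ j : ℕ, (fun σ : B ≃ₐ[A] B => InRam Ag (Ag ⊗[A] B) j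
      (Algebra.TensorProduct.congr (AlgEquiv.refl (A₁ := Ag)) σ)) =
      (fun σ : B ≃ₐ[A] B => InRam A B (j / e) σ) := by
    intro j
    funext σ
    apply propext
    have h := ramIff (A := A) (Ag := Ag) heB σ (j / e) (j % e) (Nat.mod_lt j he0)
    rw [Nat.div_add_mod] at h
    exact h.symm
  -- e * eBA = eDA
  have hmAg : (maximalIdeal A).map (algebraMap A Ag) = maximalIdeal Ag :=
    IsLocalRing.eq_maximalIdeal (Ideal.Quotient.maximal_of_isField _ hAg.2.1)
  have h1 : (maximalIdeal A).map (algebraMap A (Ag ⊗[A] B)) =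
      maximalIdeal (Ag ⊗[A] B) ^ (e * eBA) := by
    have heB' : Ideal.map
        (↑(Algebra.TensorProduct.includeRight : B →ₐ[A] Ag ⊗[A] B) : B →+* Ag ⊗[A] B)
        (maximalIdeal B) = maximalIdeal (Ag ⊗[A] B) ^ e := heB
    rw [← AlgHom.comp_algebraMap
        (Algebra.TensorProduct.includeRight : B →ₐ[A] Ag ⊗[A] B),
      ← Ideal.map_map, heBA, Ideal.map_pow, heB', ← pow_mul]
  have h2 : (maximalIdeal A).map (algebraMap A (Ag ⊗[A] B)) =
      maximalIdeal (Ag ⊗[A] B) ^ eDA := by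
    rw [IsScalarTower.algebraMap_eq A Ag (Ag ⊗[A] B), ← Ideal.map_map, hmAg, heDA]
  have heq : e * eBA = eDA := maxPow_inj (h1.symm.trans h2)
  have hBA0 : eBA ≠ 0 := by
    intro h0
    rw [h0, pow_zero, Ideal.one_eq_top] at heBA
    have hone : (1 : B) ∈ (maximalIdeal A).map (algebraMap A B) := by
      rw [heBA]; trivial
    have hle : (maximalIdeal A).map (algebraMap A B) ≤ maximalIdeal B := by
      rw [Ideal.map_le_iff_le_comap]
      intro a ha
      show algebraMap A B a ∈ maximalIdeal B
      rw [mem_maximalIdeal, mem_nonunits_iff]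
      intro hu
      exact (mem_maximalIdeal a).mp ha ((isUnit_map_iff (algebraMap A B) a).mp hu)
    exact (maximalIdeal.isMaximal B).ne_top ((Ideal.eq_top_iff_one _).mpr (hle hone))
  -- compute both sides
  unfold naiveArtin
  simp only [id_eq, hpred]
  have hB : (∑' i : ℕ, (Nat.card {σ : B ≃ₐ[A] B // InRam A B i σ} : ℝ) *
      (codimFixed Λ V (B ≃ₐ[A] B) ρ (fun σ => InRam A B i σ) : ℝ)) =
      ∑ i ∈ Finset.range N, F i := by
    refine tsum_eq_sum fun i hi => ?_
    exact hvan i (by simpa using hi)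
  have hD : (∑' j : ℕ, (Nat.card {σ : B ≃ₐ[A] B // InRam A B (j / e) σ} : ℝ) *
      (codimFixed Λ V (B ≃ₐ[A] B) ρ (fun σ => InRam A B (j / e) σ) : ℝ)) =
      ∑ j ∈ Finset.range (e * N), F (j / e) := by
    refine tsum_eq_sum fun j hj => ?_
    refine hvan (j / e) ?_
    have hj' : e * N ≤ j := by simpa using hj
    rw [Nat.le_div_iff_mul_le he0, Nat.mul_comm]
    exact hj'
  rw [hB, hD, sumDivBlock F e he0 N, ← heq]
  have heR : (e : ℝ) ≠ 0 := Nat.cast_ne_zero.mpr (by omega)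
  have hbR : (eBA : ℝ) ≠ 0 := Nat.cast_ne_zero.mpr hBA0
  push_cast
  field_simp
end
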